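/- arXiv:2505.15362 — 10 statements merged into one kernel-verified Lean document; each statement's English description precedes it below -/
import Mathlib

section
/- If \(\mathcal{E}\) is a 3-blocking set on an \(n\)-element set with \(n \ge 3\), then \(|\mathcal{E}| \ge \lceil n(n-2)/3 \rceil\). -/
/-- A `d`-partition of a finite set `V`: `d` pairwise disjoint nonempty parts whose union is `V`. -/
def IsDPartition {α : Type*} [DecidableEq α] (d : ℕ) (V : Finset α)
    (P : Fin d → Finset α) : Prop :=
  (∀ i, (P i).Nonempty) ∧ (∀ i j, i ≠ j → Disjoint (P i) (P j)) ∧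
    Finset.univ.biUnion P = V

/-- `E` is a `d`-blocking set on `V`: a family of `d`-element subsets of `V` such that every
`d`-partition of `V` has a member of `E` meeting all parts. -/
def IsBlockingSet {α : Type*} [DecidableEq α] (d : ℕ) (V : Finset α)
    (E : Finset (Finset α)) : Prop :=
  (∀ e ∈ E, e ⊆ V ∧ e.card = d) ∧
  ∀ P : Fin d → Finset α, IsDPartition d V P → ∃ e ∈ E, ∀ i, (e ∩ P i).Nonempty

/-- `phi d n` is the minimum size of a `d`-blocking set on an `n`-element set. -/
noncomputable def phi (d n : ℕ) : ℕ :=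
  sInf { m | ∃ E : Finset (Finset (Fin n)),
    IsBlockingSet d Finset.univ E ∧ E.card = m }


open Finset

/-- Key lemma: a family of 2-subsets of `W` crossing every bipartition of `W`
has at least `|W| - 1` members. -/
lemma cross_lower {α : Type*} [DecidableEq α] (W : Finset α) (F : Finset (Finset α))
    (hF : ∀ f ∈ F, f ⊆ W ∧ f.card = 2)
    (hcross : ∀ X Y : Finset α, X.Nonempty → Y.Nonempty → Disjoint X Y → X ∪ Y = W →
      ∃ f ∈ F, (f ∩ X).Nonempty ∧ (f ∩ Y).Nonempty) :
    W.card - 1 ≤ F.card := by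
  classical
  induction W using Finset.strongInduction generalizing F with
  | _ W ih =>
  by_cases hW : W.card ≤ 1
  · omega
  push_neg at hW
  obtain ⟨w, hw⟩ : W.Nonempty := Finset.card_pos.mp (by omega)
  set W' := W.erase w with hW'def
  have hW'card : W'.card = W.card - 1 := Finset.card_erase_of_mem hw
  have hW'ne : W'.Nonempty := Finset.card_pos.mp (by omega)
  have hins : insert w W' = W := Finset.insert_erase hw
  have hwW' : w ∉ W' := Finset.notMem_erase w W
  obtain ⟨f₀, hf₀F, hf₀w, hf₀W'⟩ :=
    hcross {w} W' ⟨w, Finset.mem_singleton_self w⟩ hW'ne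
      (Finset.disjoint_singleton_left.mpr hwW')
      (by rw [← Finset.insert_eq, hins])
  have hwf₀ : w ∈ f₀ := by
    obtain ⟨a, ha⟩ := hf₀w
    have := (Finset.mem_inter.mp ha)
    rw [Finset.mem_singleton] at this
    exact this.2 ▸ this.1
  obtain ⟨u, hu⟩ := hf₀W'
  obtain ⟨huf₀, huW'⟩ := Finset.mem_inter.mp hu
  have huw : u ≠ w := (Finset.mem_erase.mp huW').1
  have hf₀2 : f₀.card = 2 := (hF f₀ hf₀F).2
  have hf₀eq : f₀ = {w, u} := by
    apply (Finset.eq_of_subset_of_card_le ?_ ?_).symm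
    · intro a ha
      rcases Finset.mem_insert.mp ha with h | h
      · exact h ▸ hwf₀
      · exact (Finset.mem_singleton.mp h) ▸ huf₀
    · rw [hf₀2, Finset.card_insert_of_notMem (by simp [huw.symm]), Finset.card_singleton]
  set g : Finset α → Finset α := fun f => if w ∈ f then insert u (f.erase w) else f with hg
  set F' := (F.erase f₀).image g with hF'
  have hgb : ∀ f, ∀ b ∈ f, b ≠ w → b ∈ g f := by
    intro f b hb hbw
    simp only [hg]
    split
    · exact Finset.mem_insert_of_mem (Finset.mem_erase.mpr ⟨hbw, hb⟩)
    · exact hb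
  have hmain : ∀ f' ∈ F', f' ⊆ W' ∧ f'.card = 2 := by
    intro f' hf'
    obtain ⟨f, hf, rfl⟩ := Finset.mem_image.mp hf'
    obtain ⟨hfne, hfF⟩ := Finset.mem_erase.mp hf
    obtain ⟨hfW, hf2⟩ := hF f hfF
    by_cases hwf : w ∈ f
    · have h1 : (f.erase w).card = 1 := by rw [Finset.card_erase_of_mem hwf, hf2]
      obtain ⟨y, hy⟩ := Finset.card_eq_one.mp h1
      have hyew : y ∈ f.erase w := hy ▸ Finset.mem_singleton_self y
      have hyf : y ∈ f := Finset.mem_of_mem_erase hyew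
      have hyw : y ≠ w := (Finset.mem_erase.mp hyew).1
      have hfeq : f = {w, y} := by
        rw [← Finset.insert_erase hwf, hy]
      have hyu : y ≠ u := by
        intro h
        exact hfne (by rw [hfeq, h, hf₀eq])
      have hgf : g f = {u, y} := by simp only [hg, if_pos hwf, hy]
      constructor
      · rw [hgf]
        intro a ha
        rcases Finset.mem_insert.mp ha with h | h
        · exact h ▸ huW'
        · have hay := Finset.mem_singleton.mp h
          exact Finset.mem_erase.mpr ⟨hay ▸ hyw, hay ▸ hfW hyf⟩
      · rw [hgf, Finset.card_insert_of_notMem (by simp [hyu.symm]), Finset.card_singleton]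
    · have hgf : g f = f := by simp only [hg, if_neg hwf]
      rw [hgf]
      exact ⟨Finset.subset_erase.mpr ⟨hfW, hwf⟩, hf2⟩
  have haux : ∀ X Y : Finset α, X.Nonempty → Y.Nonempty → Disjoint X Y → X ∪ Y = W' →
      u ∈ X → ∃ f' ∈ F', (f' ∩ X).Nonempty ∧ (f' ∩ Y).Nonempty := by
    intro X Y hX hY hXY hU huX
    have hXW' : X ⊆ W' := hU ▸ Finset.subset_union_left
    have hYW' : Y ⊆ W' := hU ▸ Finset.subset_union_right
    have hwY : w ∉ Y := fun h => hwW' (hYW' h)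
    obtain ⟨f, hfF, hfX, hfY⟩ :=
      hcross (insert w X) Y ⟨w, Finset.mem_insert_self w X⟩ hY
        (Finset.disjoint_insert_left.mpr ⟨hwY, hXY⟩)
        (by rw [Finset.insert_union, hU, hins])
    obtain ⟨b, hb⟩ := hfY
    obtain ⟨hbf, hbY⟩ := Finset.mem_inter.mp hb
    have hbw : b ≠ w := fun h => hwY (h ▸ hbY)
    have hfne : f ≠ f₀ := by
      intro h
      rw [h, hf₀eq] at hbf
      rcases Finset.mem_insert.mp hbf with h' | h'
      · exact hbw h'
      · have := Finset.mem_singleton.mp h'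
        exact (Finset.disjoint_left.mp hXY (this ▸ huX)) hbY
    refine ⟨g f, Finset.mem_image_of_mem g (Finset.mem_erase.mpr ⟨hfne, hfF⟩), ?_, ?_⟩
    · by_cases hwf : w ∈ f
      · refine ⟨u, Finset.mem_inter.mpr ⟨?_, huX⟩⟩
        simp only [hg, if_pos hwf]
        exact Finset.mem_insert_self u _
      · obtain ⟨a, ha⟩ := hfX
        obtain ⟨haf, haX⟩ := Finset.mem_inter.mp ha
        have haw : a ≠ w := fun h => hwf (h ▸ haf)
        have : a ∈ X := by
          rcases Finset.mem_insert.mp haX with h | h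
          · exact absurd h haw
          · exact h
        exact ⟨a, Finset.mem_inter.mpr ⟨hgb f a haf haw, this⟩⟩
    · exact ⟨b, Finset.mem_inter.mpr ⟨hgb f b hbf hbw, hbY⟩⟩
  have hcross' : ∀ X Y : Finset α, X.Nonempty → Y.Nonempty → Disjoint X Y → X ∪ Y = W' →
      ∃ f' ∈ F', (f' ∩ X).Nonempty ∧ (f' ∩ Y).Nonempty := by
    intro X Y hX hY hXY hU
    have huXY : u ∈ X ∪ Y := hU ▸ huW'
    rcases Finset.mem_union.mp huXY with h | h
    · exact haux X Y hX hY hXY hU h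
    · obtain ⟨f', hf', h1, h2⟩ := haux Y X hY hX hXY.symm (by rw [Finset.union_comm]; exact hU) h
      exact ⟨f', hf', h2, h1⟩
  have hIH := ih W' (Finset.erase_ssubset hw) F' hmain hcross'
  have hle : F'.card ≤ F.card - 1 := by
    calc F'.card ≤ (F.erase f₀).card := Finset.card_image_le
    _ = F.card - 1 := Finset.card_erase_of_mem hf₀F
  have hF1 : 1 ≤ F.card := Finset.card_pos.mpr ⟨f₀, hf₀F⟩
  omega

theorem blocking_lower_bound {α : Type*} [DecidableEq α] (V : Finset α) (n : ℕ)
    (hn : 3 ≤ n) (hV : V.card = n) (E : Finset (Finset α))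
    (hE : IsBlockingSet 3 V E) :
    (n * (n - 2) + 2) / 3 ≤ E.card := by
  classical
  obtain ⟨hEsub, hEblock⟩ := hE
  have key : ∀ x ∈ V, n - 2 ≤ (E.filter fun e => x ∈ e).card := by
    intro x hx
    set W := V.erase x with hWdef
    set F := (E.filter fun e => x ∈ e).image (fun e => e.erase x) with hFdef
    have hcard : F.card = (E.filter fun e => x ∈ e).card := by
      apply Finset.card_image_of_injOn
      intro a ha b hb hab
      have hxa : x ∈ a := (Finset.mem_filter.mp ha).2
      have hxb : x ∈ b := (Finset.mem_filter.mp hb).2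
      have hab' : a.erase x = b.erase x := hab
      rw [← Finset.insert_erase hxa, hab', Finset.insert_erase hxb]
    have h1 : ∀ f ∈ F, f ⊆ W ∧ f.card = 2 := by
      intro f hf
      obtain ⟨e, he, rfl⟩ := Finset.mem_image.mp hf
      obtain ⟨heE, hxe⟩ := Finset.mem_filter.mp he
      refine ⟨Finset.erase_subset_erase x (hEsub e heE).1, ?_⟩
      rw [Finset.card_erase_of_mem hxe, (hEsub e heE).2]
    have h2 : ∀ X Y : Finset α, X.Nonempty → Y.Nonempty → Disjoint X Y → X ∪ Y = W →
        ∃ f ∈ F, (f ∩ X).Nonempty ∧ (f ∩ Y).Nonempty := by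
      intro X Y hX hY hXY hU
      have hXW : X ⊆ W := hU ▸ Finset.subset_union_left
      have hYW : Y ⊆ W := hU ▸ Finset.subset_union_right
      have hxX : x ∉ X := fun h => Finset.notMem_erase x V (hXW h)
      have hxY : x ∉ Y := fun h => Finset.notMem_erase x V (hYW h)
      set P : Fin 3 → Finset α := ![{x}, X, Y] with hPdef
      have hP : IsDPartition 3 V P := by
        refine ⟨?_, ?_, ?_⟩
        · intro i
          fin_cases i
          · exact ⟨x, Finset.mem_singleton_self x⟩
          · exact hX
          · exact hY
        · intro i j hij
          fin_cases i <;> fin_cases j <;>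
            simp_all [P, Finset.disjoint_singleton_left, Finset.disjoint_singleton_right,
              hXY, hXY.symm]
        · have huniv : (Finset.univ : Finset (Fin 3)) = {0, 1, 2} := by decide
          rw [huniv]
          simp only [Finset.biUnion_insert, Finset.singleton_biUnion]
          show {x} ∪ (X ∪ Y) = V
          rw [hU, ← Finset.insert_eq, Finset.insert_erase hx]
      obtain ⟨e, heE, hmeet⟩ := hEblock P hP
      have hxe : x ∈ e := by
        obtain ⟨a, ha⟩ := hmeet 0
        obtain ⟨hae, haP⟩ := Finset.mem_inter.mp ha
        have : a ∈ ({x} : Finset α) := haP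
        exact (Finset.mem_singleton.mp this) ▸ hae
      refine ⟨e.erase x, Finset.mem_image_of_mem _ (Finset.mem_filter.mpr ⟨heE, hxe⟩), ?_, ?_⟩
      · obtain ⟨a, ha⟩ := hmeet 1
        obtain ⟨hae, haP⟩ := Finset.mem_inter.mp ha
        have haX : a ∈ X := haP
        exact ⟨a, Finset.mem_inter.mpr ⟨Finset.mem_erase.mpr ⟨fun h => hxX (h ▸ haX), hae⟩, haX⟩⟩
      · obtain ⟨a, ha⟩ := hmeet 2
        obtain ⟨hae, haP⟩ := Finset.mem_inter.mp ha
        have haY : a ∈ Y := haP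
        exact ⟨a, Finset.mem_inter.mpr ⟨Finset.mem_erase.mpr ⟨fun h => hxY (h ▸ haY), hae⟩, haY⟩⟩
    have hlow := cross_lower W F h1 h2
    have hWcard : W.card = n - 1 := by rw [hWdef, Finset.card_erase_of_mem hx, hV]
    omega
  have hsum : ∑ x ∈ V, (E.filter fun e => x ∈ e).card = 3 * E.card := by
    calc ∑ x ∈ V, (E.filter fun e => x ∈ e).card
        = ∑ x ∈ V, ∑ e ∈ E, if x ∈ e then 1 else 0 :=
          Finset.sum_congr rfl fun x _ => Finset.card_filter _ _
      _ = ∑ e ∈ E, ∑ x ∈ V, if x ∈ e then 1 else 0 := Finset.sum_comm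
      _ = ∑ e ∈ E, (V.filter fun x => x ∈ e).card :=
          Finset.sum_congr rfl fun e _ => (Finset.card_filter _ _).symm
      _ = ∑ e ∈ E, e.card := by
          refine Finset.sum_congr rfl fun e he => ?_
          congr 1
          rw [Finset.filter_mem_eq_inter, Finset.inter_eq_right.mpr (hEsub e he).1]
      _ = 3 * E.card := by
          rw [Finset.sum_congr rfl (fun e he => (hEsub e he).2), Finset.sum_const,
            smul_eq_mul, mul_comm]
  have hbound : V.card * (n - 2) ≤ ∑ x ∈ V, (E.filter fun e => x ∈ e).card := by
    simpa using Finset.card_nsmul_le_sum V _ (n - 2) key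
  rw [hV, hsum] at hbound
  generalize h' : n * (n - 2) = m at hbound ⊢
  omega
end

section
/- For \(d \ge 3\) and \(n \ge d\), every \(d\)-blocking set on an \(n\)-element set has size at least \(\frac{2\, n(n-1)\cdots(n-(d-3))\,(n-(d-1))}{d!}\), i.e. \(\varphi_d(n) \ge \frac{2}{d!} \cdot (n - d + 1) \cdot \prod_{i=0}^{d-3}(n-i)\). -/
open Finset

variable {α : Type*} [DecidableEq α]

/-- `F` blocks every bipartition of `M`. -/
def Blocks2 (F : Finset (Finset α)) (M : Finset α) : Prop :=
  ∀ A B : Finset α, A ∪ B = M → Disjoint A B → A.Nonempty → B.Nonempty →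
    ∃ p ∈ F, (p ∩ A).Nonempty ∧ (p ∩ B).Nonempty

lemma blocks_restrict {F : Finset (Finset α)} {M A B : Finset α} {f : Finset α}
    (hB : Blocks2 F M) (hFM : ∀ p ∈ F, p ⊆ M ∧ p.card = 2)
    (hAB : A ∪ B = M) (hdisj : Disjoint A B)
    (hf : f ∈ F) (hfA : (f ∩ A).Nonempty) (hfB : (f ∩ B).Nonempty)
    (huniq : ∀ p ∈ F, (p ∩ A).Nonempty → (p ∩ B).Nonempty → p = f) :
    Blocks2 (F.filter (· ⊆ A)) A := by
  obtain ⟨a, ha⟩ : ∃ a, f ∩ A = {a} := by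
    rw [← card_eq_one]
    have h2 : f.card = 2 := (hFM f hf).2
    have hsub : f ⊆ M := (hFM f hf).1
    have hun : (f ∩ A) ∪ (f ∩ B) = f := by
      rw [← inter_union_distrib_left, hAB]
      exact inter_eq_left.2 hsub
    have hdis : Disjoint (f ∩ A) (f ∩ B) :=
      hdisj.mono inter_subset_right inter_subset_right
    have hcard : (f ∩ A).card + (f ∩ B).card = 2 := by
      rw [← card_union_of_disjoint hdis, hun, h2]
    have h1 : 1 ≤ (f ∩ A).card := card_pos.2 hfA
    have h1' : 1 ≤ (f ∩ B).card := card_pos.2 hfB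
    omega
  have key : ∀ A1 A2 : Finset α, A1 ∪ A2 = A → Disjoint A1 A2 →
      A1.Nonempty → A2.Nonempty → a ∉ A2 →
      ∃ p ∈ F.filter (· ⊆ A), (p ∩ A1).Nonempty ∧ (p ∩ A2).Nonempty := by
    intro A1 A2 hu hd h1 h2 haA2
    have hA1B : (A1 ∪ B) ∪ A2 = M := by
      rw [union_right_comm, hu, hAB]
    have hdA : Disjoint (A1 ∪ B) A2 := by
      refine disjoint_union_left.2 ⟨hd, ?_⟩
      exact (hdisj.mono_left (hu ▸ subset_union_right : A2 ⊆ A)).symm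
    obtain ⟨g, hgF, hg1, hg2⟩ := hB (A1 ∪ B) A2 hA1B hdA (h1.mono subset_union_left) h2
    have hA2A : A2 ⊆ A := hu ▸ subset_union_right
    have hgB : g ∩ B = ∅ := by
      by_contra hgB
      have hgBne : (g ∩ B).Nonempty := nonempty_iff_ne_empty.2 hgB
      have hgA : (g ∩ A).Nonempty := hg2.mono (inter_subset_inter (subset_refl g) hA2A)
      have hgf := huniq g hgF hgA hgBne
      subst hgf
      obtain ⟨x, hx⟩ := hg2
      have hxA : x ∈ g ∩ A := mem_inter.2 ⟨(mem_inter.1 hx).1, hA2A (mem_inter.1 hx).2⟩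
      rw [ha, mem_singleton] at hxA
      exact haA2 (hxA ▸ (mem_inter.1 hx).2)
    have hgA : g ⊆ A := by
      intro x hx
      have hxM : x ∈ M := (hFM g hgF).1 hx
      rw [← hAB] at hxM
      rcases mem_union.1 hxM with h | h
      · exact h
      · exact absurd (mem_inter.2 ⟨hx, h⟩) (by simp [hgB])
    refine ⟨g, mem_filter.2 ⟨hgF, hgA⟩, ?_, hg2⟩
    have : g ∩ (A1 ∪ B) = g ∩ A1 := by
      rw [inter_union_distrib_left, hgB, union_empty]
    rwa [this] at hg1
  intro A1 A2 hu hd h1 h2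
  have haA : a ∈ A := by have := ha ▸ mem_singleton_self a; exact (mem_inter.1 (ha ▸ mem_singleton_self a)).2
  rw [← hu] at haA
  rcases mem_union.1 haA with h | h
  · exact key A1 A2 hu hd h1 h2 (disjoint_left.1 hd h)
  · obtain ⟨p, hp, hp1, hp2⟩ := key A2 A1 (union_comm A1 A2 ▸ hu) hd.symm h2 h1
      (disjoint_left.1 hd.symm h)
    exact ⟨p, hp, hp2, hp1⟩

lemma blocks2_card (F : Finset (Finset α)) :
    ∀ M : Finset α, (∀ p ∈ F, p ⊆ M ∧ p.card = 2) → Blocks2 F M →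
      M.card ≤ F.card + 1 := by
  induction F using Finset.strongInduction with
  | _ F IH =>
    intro M hFM hB
    by_cases hM : M.card ≤ 1
    · omega
    push_neg at hM
    -- M has ≥ 2 elements, so a bipartition exists and F is nonempty
    obtain ⟨x, hx⟩ : M.Nonempty := card_pos.1 (by omega)
    have hMx : (M.erase x).Nonempty := by
      rw [← card_pos, card_erase_of_mem hx]; omega
    obtain ⟨f0, hf0, _⟩ := hB {x} (M.erase x) (by
        ext y; by_cases h : y = x <;> simp [h, hx, mem_erase])
      (by simp [disjoint_left]) ⟨x, mem_singleton_self x⟩ hMx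
    by_cases hblk : Blocks2 (F.erase f0) M
    · have h1 := IH (F.erase f0) (erase_ssubset hf0) M
        (fun p hp => hFM p (erase_subset _ _ hp)) hblk
      have := card_erase_of_mem hf0
      have : 1 ≤ F.card := card_pos.2 ⟨f0, hf0⟩
      omega
    · unfold Blocks2 at hblk
      push_neg at hblk
      obtain ⟨A, B, hAB, hdisj, hA, hBne, hno⟩ := hblk
      -- some edge crosses (A,B); it must be outside F.erase f0, so it is f0
      obtain ⟨f, hf, hfA, hfB⟩ := hB A B hAB hdisj hA hBne
      have huniq : ∀ p ∈ F, (p ∩ A).Nonempty → (p ∩ B).Nonempty → p = f0 := by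
        intro p hp hpA hpB
        by_contra hne
        exact absurd hpB (by simpa [hpA] using hno p (mem_erase.2 ⟨hne, hp⟩))
      have hff0 : f = f0 := huniq f hf hfA hfB
      subst hff0
      have hBA : B ∪ A = M := by rw [union_comm]; exact hAB
      have hResA : Blocks2 (F.filter (· ⊆ A)) A :=
        blocks_restrict hB hFM hAB hdisj hf hfA hfB huniq
      have hResB : Blocks2 (F.filter (· ⊆ B)) B :=
        blocks_restrict hB hFM hBA hdisj.symm hf hfB hfA
          (fun p hp h1 h2 => huniq p hp h2 h1)
      have hfnA : f ∉ F.filter (· ⊆ A) := by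
        intro h
        have hsub : f ⊆ A := (mem_filter.1 h).2
        obtain ⟨y, hy⟩ := hfB
        exact disjoint_left.1 hdisj (hsub (mem_inter.1 hy).1) (mem_inter.1 hy).2
      have hfnB : f ∉ F.filter (· ⊆ B) := by
        intro h
        have hsub : f ⊆ B := (mem_filter.1 h).2
        obtain ⟨y, hy⟩ := hfA
        exact disjoint_left.1 hdisj (mem_inter.1 hy).2 (hsub (mem_inter.1 hy).1)
      have hssA : F.filter (· ⊆ A) ⊂ F :=
        (ssubset_iff_of_subset (filter_subset _ _)).2 ⟨f, hf, hfnA⟩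
      have hssB : F.filter (· ⊆ B) ⊂ F :=
        (ssubset_iff_of_subset (filter_subset _ _)).2 ⟨f, hf, hfnB⟩
      have hcA := IH _ hssA A
        (fun p hp => ⟨(mem_filter.1 hp).2, (hFM p (mem_filter.1 hp).1).2⟩) hResA
      have hcB := IH _ hssB B
        (fun p hp => ⟨(mem_filter.1 hp).2, (hFM p (mem_filter.1 hp).1).2⟩) hResB
      have hMcard : M.card = A.card + B.card := by
        rw [← hAB, card_union_of_disjoint hdisj]
      have hdisjF : Disjoint (F.filter (· ⊆ A)) (F.filter (· ⊆ B)) := by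
        rw [disjoint_left]
        intro p hpA hpB
        have h2 : p.card = 2 := (hFM p (mem_filter.1 hpA).1).2
        obtain ⟨y, hy⟩ : p.Nonempty := card_pos.1 (by omega)
        exact disjoint_left.1 hdisj ((mem_filter.1 hpA).2 hy) ((mem_filter.1 hpB).2 hy)
      have hsubF : (F.filter (· ⊆ A)) ∪ (F.filter (· ⊆ B)) ⊆ F.erase f := by
        intro p hp
        rcases mem_union.1 hp with h | h
        · exact mem_erase.2 ⟨fun he => hfnA (he ▸ h), (mem_filter.1 h).1⟩
        · exact mem_erase.2 ⟨fun he => hfnB (he ▸ h), (mem_filter.1 h).1⟩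
      have hcardsum := card_le_card hsubF
      rw [card_union_of_disjoint hdisjF] at hcardsum
      have herase : (F.erase f).card = F.card - 1 := card_erase_of_mem hf
      have hFpos : 1 ≤ F.card := card_pos.2 ⟨f, hf⟩
      omega

lemma per_S {n d : ℕ} (hd : 3 ≤ d) (hn : d ≤ n) {E : Finset (Finset (Fin n))}
    (hE : IsBlockingSet d Finset.univ E) {S : Finset (Fin n)} (hS : S.card = d - 2) :
    n - d + 1 ≤ (E.filter (fun e => S ⊆ e)).card := by
  classical
  set M : Finset (Fin n) := Finset.univ \ S with hM
  have hMcard : M.card = n - (d - 2) := by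
    rw [hM, card_sdiff_of_subset (subset_univ S), hS, card_univ, Fintype.card_fin]
  set F : Finset (Finset (Fin n)) := (E.filter (fun e => S ⊆ e)).image (fun e => e \ S) with hF
  have hFM : ∀ p ∈ F, p ⊆ M ∧ p.card = 2 := by
    intro p hp
    obtain ⟨e, he, rfl⟩ := mem_image.1 hp
    obtain ⟨heE, heS⟩ := mem_filter.1 he
    refine ⟨fun x hx => ?_, ?_⟩
    · exact mem_sdiff.2 ⟨mem_univ x, (mem_sdiff.1 hx).2⟩
    · rw [card_sdiff_of_subset heS, hS, (hE.1 e heE).2]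
      omega
  have hBlk : Blocks2 F M := by
    intro A B hAB hdisj hA hB
    have hAM : A ⊆ M := hAB ▸ subset_union_left
    have hBM : B ⊆ M := hAB ▸ subset_union_right
    have hMS : Disjoint M S := sdiff_disjoint
    set s := S.orderIsoOfFin hS with hs
    set P : Fin d → Finset (Fin n) := fun i =>
      if h : (i : ℕ) < d - 2 then {(s ⟨i, h⟩ : Fin n)}
      else if (i : ℕ) = d - 2 then A else B with hP
    have hPlt : ∀ (i : Fin d) (h : (i : ℕ) < d - 2), P i = {(s ⟨i, h⟩ : Fin n)} := by
      intro i h; simp only [hP]; rw [dif_pos h]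
    have hPA : ∀ i : Fin d, (i : ℕ) = d - 2 → P i = A := by
      intro i h; simp only [hP]; rw [dif_neg (by omega), if_pos h]
    have hPB : ∀ i : Fin d, (i : ℕ) = d - 1 → P i = B := by
      intro i h; simp only [hP]; rw [dif_neg (by omega), if_neg (by omega)]
    have hiAB : ∀ i : Fin d, ¬ (i : ℕ) < d - 2 → P i ⊆ M := by
      intro i h
      have : (i : ℕ) = d - 2 ∨ (i : ℕ) = d - 1 := by have := i.2; omega
      rcases this with h2 | h2
      · rw [hPA i h2]; exact hAM
      · rw [hPB i h2]; exact hBM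
    have hPart : IsDPartition d Finset.univ P := by
      refine ⟨?_, ?_, ?_⟩
      · intro i
        by_cases hi : (i : ℕ) < d - 2
        · rw [hPlt i hi]; exact singleton_nonempty _
        · have : (i : ℕ) = d - 2 ∨ (i : ℕ) = d - 1 := by have := i.2; omega
          rcases this with h2 | h2
          · rw [hPA i h2]; exact hA
          · rw [hPB i h2]; exact hB
      · intro i j hij
        have hij' : (i : ℕ) ≠ (j : ℕ) := fun h => hij (Fin.ext h)
        by_cases hi : (i : ℕ) < d - 2 <;> by_cases hj : (j : ℕ) < d - 2
        · rw [hPlt i hi, hPlt j hj, disjoint_singleton]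
          intro h
          exact hij' (Fin.mk.inj_iff.mp (s.injective (Subtype.coe_injective h)))
        · rw [hPlt i hi, disjoint_singleton_left]
          intro hmem
          exact (disjoint_right.1 hMS) (s ⟨i, hi⟩).2 (hiAB j hj hmem)
        · rw [hPlt j hj, disjoint_singleton_right]
          intro hmem
          exact (disjoint_right.1 hMS) (s ⟨j, hj⟩).2 (hiAB i hi hmem)
        · have hi' : (i : ℕ) = d - 2 ∨ (i : ℕ) = d - 1 := by have := i.2; omega
          have hj' : (j : ℕ) = d - 2 ∨ (j : ℕ) = d - 1 := by have := j.2; omega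
          rcases hi' with hi2 | hi2 <;> rcases hj' with hj2 | hj2
          · omega
          · rw [hPA i hi2, hPB j hj2]; exact hdisj
          · rw [hPB i hi2, hPA j hj2]; exact hdisj.symm
          · omega
      · apply eq_univ_iff_forall.2
        intro x
        rw [mem_biUnion]
        by_cases hx : x ∈ S
        · set k := s.symm ⟨x, hx⟩ with hk
          have hklt : (k : ℕ) < d - 2 := k.2
          refine ⟨⟨(k : ℕ), by omega⟩, mem_univ _, ?_⟩
          rw [hPlt ⟨(k : ℕ), by omega⟩ hklt, mem_singleton]
          have hkk : (⟨((⟨(k : ℕ), by omega⟩ : Fin d) : ℕ), hklt⟩ : Fin (d - 2)) = k :=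
            Fin.ext rfl
          rw [hkk, hk]
          simp
        · have hxM : x ∈ M := mem_sdiff.2 ⟨mem_univ x, hx⟩
          rw [← hAB] at hxM
          rcases mem_union.1 hxM with h | h
          · exact ⟨⟨d - 2, by omega⟩, mem_univ _, by rw [hPA ⟨d - 2, by omega⟩ rfl]; exact h⟩
          · exact ⟨⟨d - 1, by omega⟩, mem_univ _, by rw [hPB ⟨d - 1, by omega⟩ rfl]; exact h⟩
    obtain ⟨e, heE, hei⟩ := hE.2 P hPart
    have heS : S ⊆ e := by
      intro x hx
      set k := s.symm ⟨x, hx⟩ with hk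
      have hklt : (k : ℕ) < d - 2 := k.2
      have := hei ⟨(k : ℕ), by omega⟩
      rw [hPlt ⟨(k : ℕ), by omega⟩ hklt] at this
      obtain ⟨y, hy⟩ := this
      obtain ⟨hye, hyx⟩ := mem_inter.1 hy
      rw [mem_singleton] at hyx
      have hkk : (⟨((⟨(k : ℕ), by omega⟩ : Fin d) : ℕ), hklt⟩ : Fin (d - 2)) = k :=
        Fin.ext rfl
      rw [hkk, hk] at hyx
      simp only [OrderIso.apply_symm_apply] at hyx
      rwa [hyx] at hye
    refine ⟨e \ S, mem_image.2 ⟨e, mem_filter.2 ⟨heE, heS⟩, rfl⟩, ?_, ?_⟩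
    · have := hei ⟨d - 2, by omega⟩
      rw [hPA ⟨d - 2, by omega⟩ rfl] at this
      obtain ⟨y, hy⟩ := this
      obtain ⟨hye, hyA⟩ := mem_inter.1 hy
      exact ⟨y, mem_inter.2 ⟨mem_sdiff.2 ⟨hye, fun hyS =>
        (disjoint_right.1 hMS) hyS (hAM hyA)⟩, hyA⟩⟩
    · have := hei ⟨d - 1, by omega⟩
      rw [hPB ⟨d - 1, by omega⟩ rfl] at this
      obtain ⟨y, hy⟩ := this
      obtain ⟨hye, hyB⟩ := mem_inter.1 hy
      exact ⟨y, mem_inter.2 ⟨mem_sdiff.2 ⟨hye, fun hyS =>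
        (disjoint_right.1 hMS) hyS (hBM hyB)⟩, hyB⟩⟩
  have h1 := blocks2_card F M hFM hBlk
  have h2 : F.card ≤ (E.filter (fun e => S ⊆ e)).card := card_image_le
  omega

lemma counting {n d : ℕ} (hd : 3 ≤ d) (hn : d ≤ n) {E : Finset (Finset (Fin n))}
    (hE : IsBlockingSet d Finset.univ E) :
    (n.choose (d - 2)) * (n - d + 1) ≤ E.card * d.choose 2 := by
  classical
  have hsum : ∑ S ∈ Finset.powersetCard (d - 2) (Finset.univ : Finset (Fin n)),
      (E.filter (fun e => S ⊆ e)).card = E.card * d.choose 2 := by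
    have h1 : ∀ S : Finset (Fin n), (E.filter (fun e => S ⊆ e)).card
        = ∑ e ∈ E, if S ⊆ e then 1 else 0 := fun S => card_filter _ _
    simp_rw [h1]
    rw [Finset.sum_comm]
    have h2 : ∀ e ∈ E, (∑ S ∈ Finset.powersetCard (d - 2) (Finset.univ : Finset (Fin n)),
        if S ⊆ e then 1 else 0) = d.choose 2 := by
      intro e he
      have hcard : e.card = d := (hE.1 e he).2
      rw [← card_filter]
      have heq : (Finset.powersetCard (d - 2) (Finset.univ : Finset (Fin n))).filter
          (fun S => S ⊆ e) = e.powersetCard (d - 2) := by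
        ext S
        simp only [mem_filter, mem_powersetCard, subset_univ, true_and]
        tauto
      rw [heq, card_powersetCard, hcard]
      have : d - (d - 2) = 2 := by omega
      rw [← this, Nat.choose_symm (by omega : d - 2 ≤ d), this]
    rw [Finset.sum_congr rfl h2, Finset.sum_const, smul_eq_mul]
  have hlow : (n.choose (d - 2)) * (n - d + 1) ≤
      ∑ S ∈ Finset.powersetCard (d - 2) (Finset.univ : Finset (Fin n)),
        (E.filter (fun e => S ⊆ e)).card := by
    have := Finset.card_nsmul_le_sum
      (Finset.powersetCard (d - 2) (Finset.univ : Finset (Fin n)))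
      (fun S => (E.filter (fun e => S ⊆ e)).card) (n - d + 1)
      (fun S hS => per_S hd hn hE (mem_powersetCard.1 hS).2)
    rwa [smul_eq_mul, card_powersetCard, card_univ, Fintype.card_fin] at this
  omega

lemma exists_blocking (d n : ℕ) (hn : d ≤ n) :
    ∃ E : Finset (Finset (Fin n)), IsBlockingSet d Finset.univ E := by
  classical
  refine ⟨Finset.powersetCard d Finset.univ, fun e he => ?_, fun P hP => ?_⟩
  · exact ⟨(mem_powersetCard.1 he).1, (mem_powersetCard.1 he).2⟩
  · choose x hx using hP.1
    have hinj : Function.Injective x := by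
      intro i j hij
      by_contra hne
      exact (disjoint_left.1 (hP.2.1 i j hne)) (hx i) (hij ▸ hx j)
    refine ⟨Finset.image x Finset.univ, mem_powersetCard.2 ⟨subset_univ _, ?_⟩,
      fun i => ⟨x i, mem_inter.2 ⟨mem_image.2 ⟨i, mem_univ i, rfl⟩, hx i⟩⟩⟩
    rw [card_image_of_injective _ hinj, card_univ, Fintype.card_fin]

theorem phi_lower_bound (d n : ℕ) (hd : 3 ≤ d) (hn : d ≤ n) :
    2 * ((n : ℚ) - d + 1) * (∏ i ∈ Finset.range (d - 2), ((n : ℚ) - i)) /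
        (Nat.factorial d) ≤ (phi d n : ℚ) := by
  classical
  -- obtain a minimal blocking set
  obtain ⟨E0, hE0⟩ := exists_blocking d n hn
  have hne : { m | ∃ E : Finset (Finset (Fin n)),
      IsBlockingSet d Finset.univ E ∧ E.card = m }.Nonempty := ⟨E0.card, E0, hE0, rfl⟩
  obtain ⟨E, hE, hEcard⟩ := Nat.sInf_mem hne
  have hnat : (n.choose (d - 2)) * (n - d + 1) ≤ phi d n * d.choose 2 := by
    rw [phi, ← hEcard]
    exact counting hd hn hE
  -- cast to ℚ
  have hq : ((n.choose (d - 2) : ℚ)) * ((n - d + 1 : ℕ) : ℚ) ≤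
      (phi d n : ℚ) * (d.choose 2 : ℚ) := by
    exact_mod_cast hnat
  -- rewrite the product as a descending factorial
  have hprod : (∏ i ∈ Finset.range (d - 2), ((n : ℚ) - i)) =
      ((n.descFactorial (d - 2) : ℕ) : ℚ) := by
    rw [Nat.descFactorial_eq_prod_range, Nat.cast_prod]
    refine Finset.prod_congr rfl fun i hi => ?_
    rw [Finset.mem_range] at hi
    rw [Nat.cast_sub (by omega)]
  have hdesc : ((n.descFactorial (d - 2) : ℕ) : ℚ) =
      ((d - 2).factorial : ℚ) * (n.choose (d - 2) : ℚ) := by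
    exact_mod_cast congrArg (Nat.cast (R := ℚ)) (Nat.descFactorial_eq_factorial_mul_choose n (d - 2))
  have hcast1 : ((n : ℚ) - d + 1) = ((n - d + 1 : ℕ) : ℚ) := by
    push_cast [Nat.cast_sub hn]
    ring
  have hfactnat : d.choose 2 * 2 * (d - 2).factorial = d.factorial := by
    have := Nat.choose_mul_factorial_mul_factorial (show 2 ≤ d by omega)
    simpa [Nat.factorial] using this
  have hfact : ((d.factorial : ℕ) : ℚ) =
      (d.choose 2 : ℚ) * 2 * ((d - 2).factorial : ℚ) := by
    exact_mod_cast (congrArg (Nat.cast (R := ℚ)) hfactnat).symm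
  have hfpos : (0 : ℚ) < (d.factorial : ℚ) := by
    exact_mod_cast Nat.factorial_pos d
  rw [div_le_iff₀ hfpos, hprod, hdesc, hcast1, hfact]
  have h2f : (0 : ℚ) ≤ 2 * ((d - 2).factorial : ℚ) := by positivity
  calc 2 * ((n - d + 1 : ℕ) : ℚ) * (((d - 2).factorial : ℚ) * (n.choose (d - 2) : ℚ))
      = ((n.choose (d - 2) : ℚ) * ((n - d + 1 : ℕ) : ℚ)) * (2 * ((d - 2).factorial : ℚ)) := by
        ring
    _ ≤ ((phi d n : ℚ) * (d.choose 2 : ℚ)) * (2 * ((d - 2).factorial : ℚ)) :=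
        mul_le_mul_of_nonneg_right hq h2f
    _ = (phi d n : ℚ) * ((d.choose 2 : ℚ) * 2 * ((d - 2).factorial : ℚ)) := by ring
end

section
/- If \(\mathcal{E}\) is a \(d\)-blocking set on a set \(V\) with \(|V| = n \ge d \ge 3\), then for every \((d-2)\)-element subset \(C \subseteq V\), the number of sets in \(\mathcal{E}\) containing \(C\) is at least \(n - d + 1\). -/
/-- If every cut of `W` is crossed by some 2-element member of `S`, then `S` has at least
`W.card - 1` members (connectivity lower bound on edge count). -/
lemma key_connect {α : Type*} [DecidableEq α] :
    ∀ (n : ℕ) (W : Finset α) (S : Finset (Finset α)), W.card = n →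
      (∀ e ∈ S, e ⊆ W ∧ e.card = 2) →
      (∀ X : Finset α, X ⊆ W → X.Nonempty → (W \ X).Nonempty →
        ∃ e ∈ S, (e ∩ X).Nonempty ∧ (e ∩ (W \ X)).Nonempty) →
      W.card - 1 ≤ S.card := by
  intro n
  induction n using Nat.strong_induction_on with
  | _ n ih =>
    intro W S hn hS hcut
    rcases Nat.lt_or_ge W.card 2 with h2 | h2
    · omega
    -- pick v ∈ W
    have hWne : W.Nonempty := Finset.card_pos.mp (by omega)
    obtain ⟨v, hv⟩ := hWne
    have hWv : (W \ {v}).Nonempty := by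
      rw [Finset.sdiff_nonempty]
      intro hsub
      have := Finset.card_le_card hsub
      simp at this; omega
    obtain ⟨e₀, he₀S, h₀1, h₀2⟩ := hcut {v} (Finset.singleton_subset_iff.mpr hv)
      ⟨v, Finset.mem_singleton_self v⟩ hWv
    have hve₀ : v ∈ e₀ := by
      obtain ⟨x, hx⟩ := h₀1
      simp only [Finset.mem_inter, Finset.mem_singleton] at hx
      rw [← hx.2]; exact hx.1
    obtain ⟨u, hu⟩ := h₀2
    simp only [Finset.mem_inter, Finset.mem_sdiff, Finset.mem_singleton] at hu
    have hue₀ : u ∈ e₀ := hu.1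
    have huW : u ∈ W := hu.2.1
    have huv : u ≠ v := hu.2.2
    have he₀card : e₀.card = 2 := (hS e₀ he₀S).2
    have he₀eq : e₀ = {v, u} := by
      apply Finset.eq_of_subset_of_card_le
      · intro x hx
        simp [Finset.mem_insert]
        by_contra hc
        push_neg at hc
        have : ({v, u, x} : Finset α) ⊆ e₀ := by
          intro y hy; simp at hy
          rcases hy with rfl | rfl | rfl <;> [exact hve₀; exact hue₀; exact hx]
        have hcard3 : ({v, u, x} : Finset α).card = 3 := by
          rw [Finset.card_insert_of_notMem (by
                simp only [Finset.mem_insert, Finset.mem_singleton]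
                push_neg
                exact ⟨Ne.symm huv, fun h => hc.1 h.symm⟩),
              Finset.card_insert_of_notMem (by
                simp only [Finset.mem_singleton]
                exact fun h => hc.2 h.symm),
              Finset.card_singleton]
        have := Finset.card_le_card this
        omega
      · rw [he₀card]
        exact Finset.card_insert_le _ _ |>.trans (by simp)
    set W' := W.erase v with hW'
    have hW'card : W'.card = W.card - 1 := Finset.card_erase_of_mem hv
    set f : Finset α → Finset α := fun e => if v ∈ e then insert u (e.erase v) else e with hf
    set S' := (S.erase e₀).image f with hS'def
    -- f maps edges of S.erase e₀ to 2-subsets of W'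
    have hmap : ∀ e ∈ S.erase e₀, f e ⊆ W' ∧ (f e).card = 2 := by
      intro e he
      have heS : e ∈ S := Finset.mem_of_mem_erase he
      have hene : e ≠ e₀ := Finset.ne_of_mem_erase he
      obtain ⟨heW, hecard⟩ := hS e heS
      by_cases hvE : v ∈ e
      · simp only [hf, if_pos hvE]
        have hcard1 : (e.erase v).card = 1 := by
          rw [Finset.card_erase_of_mem hvE, hecard]
        obtain ⟨w, hw⟩ := Finset.card_eq_one.mp hcard1
        have hwv : w ≠ v := by
          have : w ∈ e.erase v := hw ▸ Finset.mem_singleton_self w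
          exact Finset.ne_of_mem_erase this
        have hwe : w ∈ e := by
          have : w ∈ e.erase v := hw ▸ Finset.mem_singleton_self w
          exact Finset.mem_of_mem_erase this
        have hwu : w ≠ u := by
          rintro rfl
          apply hene
          rw [he₀eq]
          exact (Finset.insert_erase hvE).symm.trans (by rw [hw])
        constructor
        · rw [hw]
          intro x hx
          simp only [Finset.mem_insert, Finset.mem_singleton] at hx
          rcases hx with rfl | rfl
          · exact Finset.mem_erase.mpr ⟨huv, huW⟩
          · exact Finset.mem_erase.mpr ⟨hwv, heW hwe⟩
        · rw [hw, Finset.card_insert_of_notMem (by simp [Ne.symm hwu]), Finset.card_singleton]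
      · simp only [hf, if_neg hvE]
        exact ⟨fun x hx => Finset.mem_erase.mpr ⟨fun h => hvE (h ▸ hx), heW hx⟩, hecard⟩
    have hS'edges : ∀ e' ∈ S', e' ⊆ W' ∧ e'.card = 2 := by
      intro e' he'
      obtain ⟨e, he, rfl⟩ := Finset.mem_image.mp he'
      exact hmap e he
    -- cut condition for W', S'
    have hcut' : ∀ X : Finset α, X ⊆ W' → X.Nonempty → (W' \ X).Nonempty →
        ∃ e' ∈ S', (e' ∩ X).Nonempty ∧ (e' ∩ (W' \ X)).Nonempty := by
      intro X hXW' hXne hW'Xne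
      have hvX : v ∉ X := fun h => (Finset.mem_erase.mp (hXW' h)).1 rfl
      set Y : Finset α := if u ∈ X then insert v X else X with hY
      have hYW : Y ⊆ W := by
        rw [hY]; split
        · intro x hx
          rcases Finset.mem_insert.mp hx with rfl | hx
          · exact hv
          · exact (Finset.mem_erase.mp (hXW' hx)).2
        · exact fun x hx => (Finset.mem_erase.mp (hXW' hx)).2
      have hYne : Y.Nonempty := by
        obtain ⟨x, hx⟩ := hXne
        refine ⟨x, ?_⟩
        rw [hY]; split
        · exact Finset.mem_insert_of_mem hx
        · exact hx
      have hsub : W' \ X ⊆ W \ Y := by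
        intro z hz
        obtain ⟨hz1, hz2⟩ := Finset.mem_sdiff.mp hz
        obtain ⟨hzv, hzW⟩ := Finset.mem_erase.mp hz1
        refine Finset.mem_sdiff.mpr ⟨hzW, ?_⟩
        rw [hY]; split
        · intro h
          rcases Finset.mem_insert.mp h with h | h
          exacts [hzv h, hz2 h]
        · exact hz2
      have hWYne : (W \ Y).Nonempty := hW'Xne.mono hsub
      obtain ⟨e, heS, ha, hb⟩ := hcut Y hYW hYne hWYne
      -- e ≠ e₀
      have hene : e ≠ e₀ := by
        rintro rfl
        rw [he₀eq] at ha hb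
        by_cases huX : u ∈ X
        · -- v, u ∈ Y, so {v,u} ∩ (W \ Y) = ∅
          obtain ⟨b, hb'⟩ := hb
          simp only [Finset.mem_inter, Finset.mem_insert, Finset.mem_singleton,
            Finset.mem_sdiff] at hb'
          obtain ⟨hb1, hb2, hb3⟩ := hb'
          apply hb3
          rw [hY, if_pos huX]
          rcases hb1 with rfl | rfl
          · exact Finset.mem_insert_self _ _
          · exact Finset.mem_insert_of_mem huX
        · obtain ⟨a, ha'⟩ := ha
          simp only [Finset.mem_inter, Finset.mem_insert, Finset.mem_singleton] at ha'
          obtain ⟨ha1, ha2⟩ := ha'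
          rw [hY, if_neg huX] at ha2
          rcases ha1 with rfl | rfl
          exacts [hvX ha2, huX ha2]
      have heS' : f e ∈ S' := Finset.mem_image_of_mem f (Finset.mem_erase.mpr ⟨hene, heS⟩)
      refine ⟨f e, heS', ?_, ?_⟩
      · -- f e ∩ X nonempty
        obtain ⟨a, ha'⟩ := ha
        obtain ⟨hae, haY⟩ := Finset.mem_inter.mp ha'
        by_cases hav : a = v
        · subst hav
          -- v ∈ Y means u ∈ X (since Y = X otherwise and v ∉ X)
          have huX : u ∈ X := by
            by_contra huX
            rw [hY, if_neg huX] at haY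
            exact hvX haY
          refine ⟨u, Finset.mem_inter.mpr ⟨?_, huX⟩⟩
          simp only [hf, if_pos hae]
          exact Finset.mem_insert_self _ _
        · have haX : a ∈ X := by
            rw [hY] at haY
            by_cases huX : u ∈ X
            · rw [if_pos huX] at haY
              rcases Finset.mem_insert.mp haY with h | h
              exacts [absurd h hav, h]
            · rwa [if_neg huX] at haY
          refine ⟨a, Finset.mem_inter.mpr ⟨?_, haX⟩⟩
          simp only [hf]
          split
          · exact Finset.mem_insert_of_mem (Finset.mem_erase.mpr ⟨hav, hae⟩)
          · exact hae
      · -- f e ∩ (W' \ X) nonempty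
        obtain ⟨b, hb'⟩ := hb
        obtain ⟨hbe, hbWY⟩ := Finset.mem_inter.mp hb'
        obtain ⟨hbW, hbY⟩ := Finset.mem_sdiff.mp hbWY
        by_cases hbv : b = v
        · subst hbv
          -- v ∉ Y, so u ∉ X (else v ∈ Y)
          have huX : u ∉ X := by
            intro huX
            apply hbY
            rw [hY, if_pos huX]
            exact Finset.mem_insert_self _ _
          refine ⟨u, Finset.mem_inter.mpr ⟨?_, ?_⟩⟩
          · simp only [hf, if_pos hbe]
            exact Finset.mem_insert_self _ _
          · exact Finset.mem_sdiff.mpr ⟨Finset.mem_erase.mpr ⟨huv, huW⟩, huX⟩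
        · have hbX : b ∉ X := by
            intro hbX
            apply hbY
            rw [hY]
            split
            · exact Finset.mem_insert_of_mem hbX
            · exact hbX
          refine ⟨b, Finset.mem_inter.mpr ⟨?_, ?_⟩⟩
          · simp only [hf]
            split
            · exact Finset.mem_insert_of_mem (Finset.mem_erase.mpr ⟨hbv, hbe⟩)
            · exact hbe
          · exact Finset.mem_sdiff.mpr ⟨Finset.mem_erase.mpr ⟨hbv, hbW⟩, hbX⟩
    -- apply IH
    have hlt : W'.card < n := by omega
    have hIH := ih W'.card hlt W' S' rfl hS'edges hcut'
    have hS'le : S'.card ≤ (S.erase e₀).card := Finset.card_image_le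
    have herase : (S.erase e₀).card = S.card - 1 := Finset.card_erase_of_mem he₀S
    have hSpos : 1 ≤ S.card := Finset.card_pos.mpr ⟨e₀, he₀S⟩
    omega

theorem degree_lower_bound {α : Type*} [DecidableEq α] (V : Finset α) (n d : ℕ)
    (hd : 3 ≤ d) (hn : d ≤ n) (hV : V.card = n) (E : Finset (Finset α))
    (hE : IsBlockingSet d V E) (C : Finset α) (hCV : C ⊆ V) (hC : C.card = d - 2) :
    n - d + 1 ≤ (E.filter (fun e => C ⊆ e)).card := by
  classical
  obtain ⟨hEsub, hEblock⟩ := hE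
  set W : Finset α := V \ C with hWdef
  have hWcard : W.card = n - d + 2 := by
    rw [hWdef, Finset.card_sdiff_of_subset hCV, hV, hC]; omega
  set S : Finset (Finset α) := (E.filter (fun e => C ⊆ e)).image (fun e => e \ C) with hSdef
  have hinj : Set.InjOn (fun e => e \ C) ↑(E.filter (fun e => C ⊆ e)) := by
    intro e₁ h₁ e₂ h₂ h
    simp only [Finset.coe_filter, Set.mem_setOf_eq] at h₁ h₂
    have := (Finset.sdiff_union_of_subset h₁.2).symm
    rw [show e₁ \ C = e₂ \ C from h] at this
    rw [this, Finset.sdiff_union_of_subset h₂.2]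
  have hScard : S.card = (E.filter (fun e => C ⊆ e)).card :=
    Finset.card_image_of_injOn hinj
  -- enumerate C
  let g : Fin (d - 2) → α := fun j => (C.equivFin.symm (Fin.cast hC.symm j) : α)
  have hgC : ∀ j, g j ∈ C := fun j => (C.equivFin.symm (Fin.cast hC.symm j)).2
  have hginj : Function.Injective g := by
    intro a b h
    have h1 : C.equivFin.symm (Fin.cast hC.symm a) = C.equivFin.symm (Fin.cast hC.symm b) :=
      Subtype.ext h
    have h2 := C.equivFin.symm.injective h1
    exact Fin.cast_injective hC.symm h2
  have hgsurj : ∀ c ∈ C, ∃ j, g j = c := by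
    intro c hc
    refine ⟨Fin.cast hC (C.equivFin ⟨c, hc⟩), ?_⟩
    simp only [g, Fin.cast_cast, Fin.cast_eq_self]
    simp
  have hd2 : d - 2 < d := by omega
  have hd1 : d - 1 < d := by omega
  -- edge conditions for S
  have hSedges : ∀ s ∈ S, s ⊆ W ∧ s.card = 2 := by
    intro s hs
    obtain ⟨e, he, rfl⟩ := Finset.mem_image.mp hs
    obtain ⟨heE, hCe⟩ := Finset.mem_filter.mp he
    obtain ⟨heV, hecard⟩ := hEsub e heE
    constructor
    · exact fun x hx => Finset.mem_sdiff.mpr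
        ⟨heV (Finset.mem_sdiff.mp hx).1, (Finset.mem_sdiff.mp hx).2⟩
    · rw [Finset.card_sdiff_of_subset hCe, hecard, hC]; omega
  -- cut condition for S
  have hScut : ∀ X : Finset α, X ⊆ W → X.Nonempty → (W \ X).Nonempty →
      ∃ s ∈ S, (s ∩ X).Nonempty ∧ (s ∩ (W \ X)).Nonempty := by
    intro X hXW hXne hWXne
    have hXC : ∀ x ∈ X, x ∉ C := fun x hx => (Finset.mem_sdiff.mp (hXW hx)).2
    set P : Fin d → Finset α := fun i =>
      if h : (i : ℕ) < d - 2 then {g ⟨i, h⟩}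
      else if (i : ℕ) = d - 2 then X else W \ X with hPdef
    have hPlt : ∀ (i : Fin d) (h : (i : ℕ) < d - 2), P i = {g ⟨i, h⟩} :=
      fun i h => dif_pos h
    have hPX : P ⟨d - 2, hd2⟩ = X := by
      rw [hPdef]
      simp only
      rw [dif_neg (by omega)]
      simp
    have hPY : P ⟨d - 1, hd1⟩ = W \ X := by
      rw [hPdef]
      simp only
      rw [dif_neg (by omega), if_neg (by omega)]
    have hpart : IsDPartition d V P := by
      refine ⟨?_, ?_, ?_⟩
      · intro i
        by_cases h : (i : ℕ) < d - 2
        · rw [hPlt i h]; exact Finset.singleton_nonempty _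
        · rw [hPdef]; simp only [dif_neg h]
          split
          · exact hXne
          · exact hWXne
      · intro i j hij
        have hvij : (i : ℕ) ≠ (j : ℕ) := fun h => hij (Fin.ext h)
        rw [hPdef]
        simp only
        split_ifs with h1 h2 h3 h4 h5 h6 h7
        · rw [Finset.disjoint_singleton]
          intro h
          have h' := hginj h
          rw [Fin.mk.injEq] at h'
          exact hvij h'
        · rw [Finset.disjoint_singleton_left]
          exact fun h => hXC _ h (hgC _)
        · rw [Finset.disjoint_singleton_left]
          intro h
          exact (Finset.mem_sdiff.mp (Finset.mem_sdiff.mp h).1).2 (hgC _)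
        · rw [Finset.disjoint_singleton_right]
          exact fun h => hXC _ h (hgC _)
        · omega
        · rw [Finset.disjoint_left]
          intro a haX haWX
          exact (Finset.mem_sdiff.mp haWX).2 haX
        · rw [Finset.disjoint_singleton_right]
          intro h
          obtain ⟨hW', hX'⟩ := Finset.mem_sdiff.mp h
          exact (Finset.mem_sdiff.mp hW').2 (hgC _)
        · rw [Finset.disjoint_left]
          intro a haWX haX
          exact (Finset.mem_sdiff.mp haWX).2 haX
        · omega
      · ext a
        simp only [Finset.mem_biUnion, Finset.mem_univ, true_and]
        constructor
        · rintro ⟨i, hi⟩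
          by_cases h : (i : ℕ) < d - 2
          · rw [hPlt i h] at hi
            rw [Finset.mem_singleton.mp hi]
            exact hCV (hgC _)
          · rw [hPdef] at hi
            simp only [dif_neg h] at hi
            split at hi
            · exact (Finset.mem_sdiff.mp (hXW hi)).1
            · exact (Finset.mem_sdiff.mp (Finset.mem_sdiff.mp hi).1).1
        · intro haV
          by_cases haC : a ∈ C
          · obtain ⟨j, hj⟩ := hgsurj a haC
            have hjd : (j : ℕ) < d := lt_of_lt_of_le j.2 (by omega)
            refine ⟨⟨j, hjd⟩, ?_⟩
            rw [hPlt ⟨j, hjd⟩ j.2]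
            rw [Finset.mem_singleton]
            rw [show (⟨((⟨(j : ℕ), hjd⟩ : Fin d) : ℕ), j.2⟩ : Fin (d - 2)) = j from rfl]
            exact hj.symm
          · have haW : a ∈ W := Finset.mem_sdiff.mpr ⟨haV, haC⟩
            by_cases haX : a ∈ X
            · exact ⟨⟨d - 2, hd2⟩, by rw [hPX]; exact haX⟩
            · exact ⟨⟨d - 1, hd1⟩, by rw [hPY]; exact Finset.mem_sdiff.mpr ⟨haW, haX⟩⟩
    obtain ⟨e, heE, he⟩ := hEblock P hpart
    have hCe : C ⊆ e := by
      intro c hc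
      obtain ⟨j, hj⟩ := hgsurj c hc
      have hjd : (j : ℕ) < d := lt_of_lt_of_le j.2 (by omega)
      have := he ⟨j, hjd⟩
      rw [hPlt ⟨j, hjd⟩ j.2] at this
      obtain ⟨x, hx⟩ := this
      obtain ⟨hxe, hxs⟩ := Finset.mem_inter.mp hx
      rw [Finset.mem_singleton] at hxs
      rw [show (⟨((⟨(j : ℕ), hjd⟩ : Fin d) : ℕ), j.2⟩ : Fin (d - 2)) = j from rfl] at hxs
      rw [hxs, hj] at hxe
      exact hxe
    refine ⟨e \ C, Finset.mem_image_of_mem _ (Finset.mem_filter.mpr ⟨heE, hCe⟩), ?_, ?_⟩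
    · have := he ⟨d - 2, hd2⟩
      rw [hPX] at this
      obtain ⟨x, hx⟩ := this
      obtain ⟨hxe, hxX⟩ := Finset.mem_inter.mp hx
      exact ⟨x, Finset.mem_inter.mpr
        ⟨Finset.mem_sdiff.mpr ⟨hxe, hXC x hxX⟩, hxX⟩⟩
    · have := he ⟨d - 1, hd1⟩
      rw [hPY] at this
      obtain ⟨x, hx⟩ := this
      obtain ⟨hxe, hxWX⟩ := Finset.mem_inter.mp hx
      have hxC : x ∉ C := (Finset.mem_sdiff.mp (Finset.mem_sdiff.mp hxWX).1).2
      exact ⟨x, Finset.mem_inter.mpr ⟨Finset.mem_sdiff.mpr ⟨hxe, hxC⟩, hxWX⟩⟩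
  have hkey := key_connect W.card W S rfl hSedges hScut
  omega
end

section
/- For every \(d \ge 2\) and \(n > d\), we have \(\varphi_d(n) \le \varphi_{d-1}(n-1) + \varphi_d(n-1)\). -/
lemma blocking_exists (d n : ℕ) (h : d ≤ n) :
    ∃ E : Finset (Finset (Fin n)), IsBlockingSet d Finset.univ E := by
  refine ⟨Finset.powersetCard d Finset.univ, ?_, ?_⟩
  · intro e he
    rwa [Finset.mem_powersetCard] at he
  · rintro P ⟨hne, hdisj, hun⟩
    choose x hx using hne
    have hxinj : Function.Injective x := by
      intro i j hij
      by_contra h'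
      exact (Finset.not_disjoint_iff.2 ⟨x i, hx i, hij ▸ hx j⟩) (hdisj i j h')
    refine ⟨Finset.image x Finset.univ, ?_, ?_⟩
    · rw [Finset.mem_powersetCard]
      exact ⟨Finset.subset_univ _, by
        rw [Finset.card_image_of_injective _ hxinj, Finset.card_univ, Fintype.card_fin]⟩
    · intro i
      exact ⟨x i, Finset.mem_inter.2 ⟨Finset.mem_image_of_mem x (Finset.mem_univ i), hx i⟩⟩

lemma phi_spec (d n : ℕ) (h : d ≤ n) :
    ∃ E : Finset (Finset (Fin n)), IsBlockingSet d Finset.univ E ∧ E.card = phi d n := by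
  have hne : { m | ∃ E : Finset (Finset (Fin n)),
      IsBlockingSet d Finset.univ E ∧ E.card = m }.Nonempty := by
    obtain ⟨E, hE⟩ := blocking_exists d n h
    exact ⟨E.card, E, hE, rfl⟩
  exact Nat.sInf_mem hne

theorem phi_point_recurrence (d n : ℕ) (hd : 2 ≤ d) (hn : d < n) :
    phi d n ≤ phi (d - 1) (n - 1) + phi d (n - 1) := by
  obtain ⟨d', rfl⟩ : ∃ d', d = d' + 1 := ⟨d - 1, (Nat.succ_pred_eq_of_pos (by omega)).symm⟩
  obtain ⟨n', rfl⟩ : ∃ n', n = n' + 1 := ⟨n - 1, (Nat.succ_pred_eq_of_pos (by omega)).symm⟩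
  simp only [Nat.add_sub_cancel]
  obtain ⟨E1, hE1, hc1⟩ := phi_spec d' n' (by omega)
  obtain ⟨E2, hE2, hc2⟩ := phi_spec (d' + 1) n' (by omega)
  set v : Fin (n' + 1) := Fin.last n' with hv
  set cemb : Fin n' ↪ Fin (n' + 1) := ⟨Fin.castSucc, Fin.castSucc_injective n'⟩ with hcemb
  have hvnot : ∀ e : Finset (Fin n'), v ∉ e.map cemb := by
    intro e hmem
    obtain ⟨x, _, hx⟩ := Finset.mem_map.1 hmem
    exact (Fin.castSucc_lt_last x).ne hx
  set E : Finset (Finset (Fin (n' + 1))) :=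
    E1.image (fun e => insert v (e.map cemb)) ∪ E2.image (fun e => e.map cemb) with hE
  have hblock : IsBlockingSet (d' + 1) Finset.univ E := by
    constructor
    · intro f hf
      rcases Finset.mem_union.1 hf with hf | hf
      · obtain ⟨e, he, rfl⟩ := Finset.mem_image.1 hf
        refine ⟨Finset.subset_univ _, ?_⟩
        rw [Finset.card_insert_of_notMem (hvnot e), Finset.card_map, (hE1.1 e he).2]
      · obtain ⟨e, he, rfl⟩ := Finset.mem_image.1 hf
        refine ⟨Finset.subset_univ _, ?_⟩
        rw [Finset.card_map, (hE2.1 e he).2]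
    · rintro P ⟨hne, hdisj, hun⟩
      have hvmem : ∃ i, v ∈ P i := by
        have : v ∈ Finset.univ.biUnion P := hun ▸ Finset.mem_univ v
        obtain ⟨i, _, hi⟩ := Finset.mem_biUnion.1 this
        exact ⟨i, hi⟩
      obtain ⟨i, hvi⟩ := hvmem
      have hvnotin : ∀ k, k ≠ i → v ∉ P k := by
        intro k hk hvk
        exact (Finset.not_disjoint_iff.2 ⟨v, hvk, hvi⟩) (hdisj k i hk)
      have hcov : ∀ x : Fin n', ∃ k, Fin.castSucc x ∈ P k := by
        intro x
        have : Fin.castSucc x ∈ Finset.univ.biUnion P := hun ▸ Finset.mem_univ _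
        obtain ⟨k, _, hk⟩ := Finset.mem_biUnion.1 this
        exact ⟨k, hk⟩
      by_cases hcase : ∀ y ∈ P i, y = v
      · -- P i = {v}; use E1 on the other d' parts
        set Q : Fin d' → Finset (Fin n') :=
          fun j => Finset.univ.filter (fun x => Fin.castSucc x ∈ P (Fin.succAbove i j)) with hQ
        have hQmem : ∀ j x, x ∈ Q j ↔ Fin.castSucc x ∈ P (Fin.succAbove i j) := by
          intro j x; simp [hQ]
        have hQpart : IsDPartition d' Finset.univ Q := by
          refine ⟨?_, ?_, ?_⟩
          · intro j
            obtain ⟨y, hy⟩ := hne (Fin.succAbove i j)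
            have hyne : y ≠ v := by
              intro h; exact hvnotin _ (Fin.succAbove_ne i j) (h ▸ hy)
            refine ⟨y.castPred hyne, ?_⟩
            rw [hQmem]
            rwa [Fin.castSucc_castPred]
          · intro j k hjk
            rw [Finset.disjoint_left]
            intro x hxj hxk
            have h1 := (hQmem j x).1 hxj
            have h2 := (hQmem k x).1 hxk
            have : Fin.succAbove i j ≠ Fin.succAbove i k :=
              fun h => hjk (Fin.succAbove_right_injective h)
            exact (Finset.not_disjoint_iff.2 ⟨_, h1, h2⟩) (hdisj _ _ this)
          · apply Finset.eq_univ_of_forall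
            intro x
            rw [Finset.mem_biUnion]
            obtain ⟨k, hk⟩ := hcov x
            have hki : k ≠ i := by
              intro h
              have := hcase _ (h ▸ hk)
              exact (Fin.castSucc_lt_last x).ne this
            obtain ⟨j, hj⟩ := Fin.exists_succAbove_eq hki
            exact ⟨j, Finset.mem_univ _, (hQmem j x).2 (hj ▸ hk)⟩
        obtain ⟨e, he, hmeet⟩ := hE1.2 Q hQpart
        refine ⟨insert v (e.map cemb), Finset.mem_union_left _
          (Finset.mem_image_of_mem _ he), ?_⟩
        intro k
        by_cases hki : k = i
        · exact ⟨v, Finset.mem_inter.2 ⟨Finset.mem_insert_self _ _, hki ▸ hvi⟩⟩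
        · obtain ⟨j, hj⟩ := Fin.exists_succAbove_eq hki
          obtain ⟨x, hx⟩ := hmeet j
          rw [Finset.mem_inter] at hx
          refine ⟨Fin.castSucc x, Finset.mem_inter.2 ⟨?_, ?_⟩⟩
          · exact Finset.mem_insert_of_mem (Finset.mem_map_of_mem cemb hx.1)
          · exact hj ▸ (hQmem j x).1 hx.2
      · -- P i has a point ≠ v; use E2
        push_neg at hcase
        obtain ⟨y0, hy0, hy0v⟩ := hcase
        set Q : Fin (d' + 1) → Finset (Fin n') :=
          fun k => Finset.univ.filter (fun x => Fin.castSucc x ∈ P k) with hQ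
        have hQmem : ∀ k x, x ∈ Q k ↔ Fin.castSucc x ∈ P k := by
          intro k x; simp [hQ]
        have hQpart : IsDPartition (d' + 1) Finset.univ Q := by
          refine ⟨?_, ?_, ?_⟩
          · intro k
            by_cases hki : k = i
            · refine ⟨y0.castPred hy0v, ?_⟩
              rw [hQmem, Fin.castSucc_castPred]
              exact hki ▸ hy0
            · obtain ⟨y, hy⟩ := hne k
              have hyne : y ≠ v := fun h => hvnotin k hki (h ▸ hy)
              refine ⟨y.castPred hyne, ?_⟩
              rw [hQmem, Fin.castSucc_castPred]
              exact hy
          · intro j k hjk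
            rw [Finset.disjoint_left]
            intro x hxj hxk
            exact (Finset.not_disjoint_iff.2
              ⟨_, (hQmem j x).1 hxj, (hQmem k x).1 hxk⟩) (hdisj j k hjk)
          · apply Finset.eq_univ_of_forall
            intro x
            rw [Finset.mem_biUnion]
            obtain ⟨k, hk⟩ := hcov x
            exact ⟨k, Finset.mem_univ _, (hQmem k x).2 hk⟩
        obtain ⟨e, he, hmeet⟩ := hE2.2 Q hQpart
        refine ⟨e.map cemb, Finset.mem_union_right _ (Finset.mem_image_of_mem _ he), ?_⟩
        intro k
        obtain ⟨x, hx⟩ := hmeet k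
        rw [Finset.mem_inter] at hx
        exact ⟨Fin.castSucc x, Finset.mem_inter.2
          ⟨Finset.mem_map_of_mem cemb hx.1, (hQmem k x).1 hx.2⟩⟩
  calc phi (d' + 1) (n' + 1) ≤ E.card := Nat.sInf_le ⟨E, hblock, rfl⟩
    _ ≤ E1.card + E2.card :=
        le_trans (Finset.card_union_le _ _)
          (Nat.add_le_add (Finset.card_image_le) (Finset.card_image_le))
    _ = phi d' n' + phi (d' + 1) n' := by rw [hc1, hc2]
end

section
/- Let \(A\) and \(B\) be disjoint sets and let \(x \in V = A \cup B\). If \(\mathcal{A}\) is a \((d-1)\)-blocking set on \(V \setminus \{x\}\) and \(\mathcal{B}\) is a \(d\)-blocking set on \(V \setminus \{x\}\), then \(\{\,E \cup \{x\} : E \in \mathcal{A}\,\} \cup \mathcal{B}\) is a \(d\)-blocking set on \(V\). -/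
theorem blocking_of_point_extension {α : Type*} [DecidableEq α] (d : ℕ) (hd : 2 ≤ d)
    (V : Finset α) (hV : d < V.card) (x : α) (hx : x ∈ V)
    (𝒜 ℬ : Finset (Finset α))
    (h𝒜 : IsBlockingSet (d - 1) (V.erase x) 𝒜)
    (hℬ : IsBlockingSet d (V.erase x) ℬ) :
    IsBlockingSet d V ((𝒜.image (insert x)) ∪ ℬ) := by
  obtain ⟨n, rfl⟩ : ∃ n, d = n + 1 := ⟨d - 1, (Nat.succ_pred_eq_of_pos (by omega)).symm⟩
  obtain ⟨hA1, hA2⟩ := h𝒜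
  obtain ⟨hB1, hB2⟩ := hℬ
  constructor
  · intro e he
    rcases Finset.mem_union.1 he with he | he
    · obtain ⟨a, ha, rfl⟩ := Finset.mem_image.1 he
      obtain ⟨hsub, hcard⟩ := hA1 a ha
      have hxa : x ∉ a := fun h => (Finset.mem_erase.1 (hsub h)).1 rfl
      refine ⟨Finset.insert_subset hx (hsub.trans (Finset.erase_subset _ _)), ?_⟩
      rw [Finset.card_insert_of_notMem hxa, hcard]; omega
    · obtain ⟨hsub, hcard⟩ := hB1 e he
      exact ⟨hsub.trans (Finset.erase_subset _ _), hcard⟩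
  · rintro P ⟨hPne, hPdisj, hPunion⟩
    obtain ⟨i0, _, hi0⟩ := Finset.mem_biUnion.1 (hPunion ▸ hx)
    have hxnot : ∀ i, i ≠ i0 → x ∉ P i := fun i hi hxi =>
      (Finset.disjoint_left.1 (hPdisj i i0 hi) hxi) hi0
    by_cases hsingle : ((P i0).erase x).Nonempty
    · -- P i0 has another point besides x: remove x and use ℬ
      have hQP : IsDPartition (n + 1) (V.erase x) (fun i => (P i).erase x) := by
        refine ⟨?_, ?_, ?_⟩
        · intro i
          by_cases h : i = i0
          · subst h; exact hsingle
          · show ((P i).erase x).Nonempty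
            rw [Finset.erase_eq_of_notMem (hxnot i h)]
            exact hPne i
        · intro i j hij
          exact Finset.disjoint_of_subset_left (Finset.erase_subset _ _)
            (Finset.disjoint_of_subset_right (Finset.erase_subset _ _) (hPdisj i j hij))
        · ext y
          simp only [Finset.mem_biUnion, Finset.mem_erase, Finset.mem_univ, true_and]
          constructor
          · rintro ⟨i, hyx, hy⟩
            exact ⟨hyx, by rw [← hPunion]; exact Finset.mem_biUnion.2 ⟨i, Finset.mem_univ i, hy⟩⟩
          · rintro ⟨hyx, hy⟩
            obtain ⟨i, _, hyi⟩ := Finset.mem_biUnion.1 (hPunion ▸ hy)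
            exact ⟨i, hyx, hyi⟩
      obtain ⟨e, he, hemeet⟩ := hB2 _ hQP
      exact ⟨e, Finset.mem_union_right _ he, fun i =>
        (hemeet i).mono (Finset.inter_subset_inter le_rfl (Finset.erase_subset _ _))⟩
    · -- P i0 = {x}: the other n parts partition V.erase x; use 𝒜
      have hPi0 : P i0 = {x} := by
        rw [Finset.not_nonempty_iff_eq_empty, Finset.erase_eq_empty_iff] at hsingle
        rcases hsingle with h | h
        · exact absurd h (hPne i0).ne_empty
        · exact h
      have hQP : IsDPartition n (V.erase x) (fun j => P (i0.succAbove j)) := by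
        refine ⟨fun j => hPne _, ?_, ?_⟩
        · intro i j hij
          exact hPdisj _ _ (Fin.succAbove_right_injective.ne hij)
        · ext y
          simp only [Finset.mem_biUnion, Finset.mem_erase, Finset.mem_univ, true_and]
          constructor
          · rintro ⟨j, hy⟩
            refine ⟨fun hyx => hxnot _ (Fin.succAbove_ne i0 j) (hyx ▸ hy), ?_⟩
            rw [← hPunion]; exact Finset.mem_biUnion.2 ⟨_, Finset.mem_univ _, hy⟩
          · rintro ⟨hyx, hy⟩
            obtain ⟨i, _, hyi⟩ := Finset.mem_biUnion.1 (hPunion ▸ hy)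
            have hi : i ≠ i0 := by
              rintro rfl
              rw [hPi0, Finset.mem_singleton] at hyi
              exact hyx hyi
            obtain ⟨j, rfl⟩ := Fin.exists_succAbove_eq hi
            exact ⟨j, hyi⟩
      obtain ⟨a, ha, hameet⟩ := hA2 _ hQP
      refine ⟨insert x a, Finset.mem_union_left _ (Finset.mem_image_of_mem _ ha), fun i => ?_⟩
      by_cases h : i = i0
      · subst h
        exact ⟨x, Finset.mem_inter.2 ⟨Finset.mem_insert_self _ _, hi0⟩⟩
      · obtain ⟨j, rfl⟩ := Fin.exists_succAbove_eq h
        exact (hameet j).mono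
          (Finset.inter_subset_inter (Finset.subset_insert _ _) le_rfl)
end

section
/- Let \(A, B\) be disjoint \(k\)-element sets, \(d \ge 1\). For each \(i \in \{0, \dots, d-1\}\), let \(T_i\) be a \((d-i)\)-blocking set on \(B\), and let \(W_i = \{\, s \cup t : s \in \binom{A}{i},\ t \in T_i \,\}\). Then \(W = \bigcup_{i=0}^{d-1} W_i\) is a \(d\)-blocking set on \(A \cup B\). -/
theorem blocking_of_split {α : Type*} [DecidableEq α] (d k : ℕ) (hd : 1 ≤ d)
    (A B : Finset α) (hAB : Disjoint A B) (hA : A.card = k) (hB : B.card = k)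
    (T : Fin d → Finset (Finset α))
    (hT : ∀ i : Fin d, IsBlockingSet (d - i.val) B (T i)) :
    IsBlockingSet d (A ∪ B)
      ((Finset.univ : Finset (Fin d)).biUnion fun i =>
        ((A.powersetCard i.val) ×ˢ (T i)).image fun p => p.1 ∪ p.2) := by
  classical
  constructor
  · intro e he
    simp only [Finset.mem_biUnion, Finset.mem_image, Finset.mem_product, Finset.mem_univ,
      true_and, Prod.exists] at he
    obtain ⟨i, s, t, ⟨hs, ht⟩, rfl⟩ := he
    rw [Finset.mem_powersetCard] at hs
    obtain ⟨htB, htc⟩ := (hT i).1 t ht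
    have hst : Disjoint s t := hAB.mono hs.1 htB
    refine ⟨Finset.union_subset (hs.1.trans Finset.subset_union_left)
      (htB.trans Finset.subset_union_right), ?_⟩
    rw [Finset.card_union_of_disjoint hst, hs.2, htc]
    have := i.2
    omega
  · intro P hP
    obtain ⟨hne, hdisj, hunion⟩ := hP
    -- If B is empty, then k = 0, A is empty, and no partition exists.
    by_cases hBne : B.Nonempty
    · set S : Finset (Fin d) := Finset.univ.filter (fun j => P j ∩ B = ∅) with hSdef
      have hmemS : ∀ j, j ∈ S ↔ P j ∩ B = ∅ := by
        intro j; simp [hSdef]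
      have hPsub : ∀ j, P j ⊆ A ∪ B := by
        intro j
        rw [← hunion]
        exact Finset.subset_biUnion_of_mem P (Finset.mem_univ j)
      have hi : S.card < d := by
        rcases lt_or_eq_of_le (le_trans (Finset.card_le_card (Finset.subset_univ S))
          (le_of_eq (Finset.card_univ.trans (Fintype.card_fin d)))) with h | h
        · exact h
        · exfalso
          have hSuniv : S = Finset.univ := Finset.eq_univ_of_card S (by simp [h])
          obtain ⟨b, hb⟩ := hBne
          have hbU : b ∈ Finset.univ.biUnion P := by
            rw [hunion]; exact Finset.mem_union_right _ hb
          obtain ⟨j, -, hbj⟩ := Finset.mem_biUnion.mp hbU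
          have h1 : P j ∩ B = ∅ := (hmemS j).1 (hSuniv ▸ Finset.mem_univ j)
          have h2 : b ∈ P j ∩ B := Finset.mem_inter.mpr ⟨hbj, hb⟩
          rw [h1] at h2
          exact Finset.notMem_empty b h2
      have hCcard : Sᶜ.card = d - S.card := by
        have := Finset.card_compl S
        simp only [Fintype.card_fin] at this
        omega
      set i : Fin d := ⟨S.card, hi⟩ with hidef
      set f : Fin (d - i.val) ≃ {x // x ∈ Sᶜ} := (Sᶜ.equivFinOfCardEq hCcard).symm with hfdef
      set Q : Fin (d - i.val) → Finset α := fun m => P (f m).1 ∩ B with hQdef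
      have hQpart : IsDPartition (d - i.val) B Q := by
        refine ⟨?_, ?_, ?_⟩
        · intro m
          have hfm : (f m).1 ∈ Sᶜ := (f m).2
          rw [Finset.mem_compl, hmemS] at hfm
          exact Finset.nonempty_iff_ne_empty.mpr hfm
        · intro m m' hmm
          have : (f m).1 ≠ (f m').1 := by
            intro h
            exact hmm (f.injective (Subtype.ext h))
          exact (hdisj _ _ this).mono Finset.inter_subset_left Finset.inter_subset_left
        · apply Finset.Subset.antisymm
          · intro b hb
            obtain ⟨m, -, hbm⟩ := Finset.mem_biUnion.mp hb
            exact (Finset.mem_inter.mp hbm).2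
          · intro b hb
            have hbU : b ∈ Finset.univ.biUnion P := by
              rw [hunion]; exact Finset.mem_union_right _ hb
            obtain ⟨j, -, hbj⟩ := Finset.mem_biUnion.mp hbU
            have hjC : j ∈ Sᶜ := by
              rw [Finset.mem_compl, hmemS]
              intro h
              have h2 : b ∈ P j ∩ B := Finset.mem_inter.mpr ⟨hbj, hb⟩
              rw [h] at h2
              exact Finset.notMem_empty b h2
            refine Finset.mem_biUnion.mpr ⟨f.symm ⟨j, hjC⟩, Finset.mem_univ _, ?_⟩
            rw [hQdef]
            simp only [Equiv.apply_symm_apply]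
            exact Finset.mem_inter.mpr ⟨hbj, hb⟩
      obtain ⟨t, ht, htmeet⟩ := (hT i).2 Q hQpart
      -- build s by picking one point of each part indexed by S
      have hpick : ∀ j : Fin d, ∃ a, a ∈ P j := fun j => hne j
      choose a ha using hpick
      set s : Finset α := S.image a with hsdef
      have hainj : Set.InjOn a ↑S := by
        intro j hj j' hj' hjj
        by_contra hne'
        have := hdisj j j' hne'
        exact (Finset.disjoint_left.mp this (ha j)) (hjj ▸ ha j')
      have hscard : s.card = i.val := by
        rw [hsdef, Finset.card_image_of_injOn hainj]
      have hsA : s ⊆ A := by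
        intro x hx
        obtain ⟨j, hj, rfl⟩ := Finset.mem_image.mp hx
        have hxAB : a j ∈ A ∪ B := hPsub j (ha j)
        rcases Finset.mem_union.mp hxAB with h | h
        · exact h
        · exfalso
          have h1 : P j ∩ B = ∅ := (hmemS j).1 hj
          have h2 : a j ∈ P j ∩ B := Finset.mem_inter.mpr ⟨ha j, h⟩
          rw [h1] at h2
          exact Finset.notMem_empty _ h2
      refine ⟨s ∪ t, ?_, ?_⟩
      · refine Finset.mem_biUnion.mpr ⟨i, Finset.mem_univ _, ?_⟩
        refine Finset.mem_image.mpr ⟨(s, t), ?_, rfl⟩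
        rw [Finset.mem_product, Finset.mem_powersetCard]
        exact ⟨⟨hsA, hscard⟩, ht⟩
      · intro j
        by_cases hj : j ∈ S
        · exact ⟨a j, Finset.mem_inter.mpr ⟨Finset.mem_union_left _
            (Finset.mem_image.mpr ⟨j, hj, rfl⟩), ha j⟩⟩
        · have hjC : j ∈ Sᶜ := Finset.mem_compl.mpr hj
          obtain ⟨x, hx⟩ := htmeet (f.symm ⟨j, hjC⟩)
          rw [hQdef] at hx
          simp only [Equiv.apply_symm_apply] at hx
          rw [Finset.mem_inter, Finset.mem_inter] at hx
          exact ⟨x, Finset.mem_inter.mpr ⟨Finset.mem_union_right _ hx.1, hx.2.1⟩⟩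
    · exfalso
      rw [Finset.not_nonempty_iff_eq_empty] at hBne
      have hk : k = 0 := by rw [← hB, hBne, Finset.card_empty]
      have hAe : A = ∅ := Finset.card_eq_zero.mp (hA.trans hk)
      have := hne ⟨0, hd⟩
      obtain ⟨x, hx⟩ := this
      have : x ∈ A ∪ B := by
        rw [← hunion]
        exact Finset.mem_biUnion.mpr ⟨⟨0, hd⟩, Finset.mem_univ _, hx⟩
      simp [hAe, hBne] at this
end

section
/- Define \(\gamma_1 = \gamma_2 = 1\), \(\gamma_3 = 1/3\), and for \(d \ge 4\), \(\gamma_d = \frac{1}{2^{d-1}-1} \sum_{i=1}^{d-1} \frac{\gamma_{d-i}}{i!}\). Then for all \(d \ge 1\), \(\gamma_d \le \frac{1}{(d-1)!}\). -/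
/-- The sequence `γ_d`: `γ_1 = γ_2 = 1`, `γ_3 = 1/3`, and for `d ≥ 4`,
`γ_d = (1 / (2^(d-1) - 1)) * ∑_{i=1}^{d-1} γ_{d-i} / i!`. -/
def gamma : ℕ → ℚ
  | 0 => 0
  | 1 => 1
  | 2 => 1
  | 3 => 1/3
  | (d + 4) => (1 / (2 ^ (d + 3) - 1)) *
      ∑ i ∈ (Finset.Icc 1 (d + 3)).attach,
        gamma (d + 4 - i.val) / (Nat.factorial i.val)
  decreasing_by
    have := i.property
    simp only [Finset.mem_Icc] at this
    omega

lemma sum_inv_fact (n : ℕ) :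
    ∑ i ∈ Finset.Icc 1 n, (1 : ℚ) / (Nat.factorial (n - i)) / (Nat.factorial i)
      = (2 ^ n - 1) / Nat.factorial n := by
  have key : ∀ i ∈ Finset.Icc 1 n,
      (1 : ℚ) / (Nat.factorial (n - i)) / (Nat.factorial i)
        = (n.choose i : ℚ) / Nat.factorial n := by
    intro i hi
    simp only [Finset.mem_Icc] at hi
    have h := Nat.choose_mul_factorial_mul_factorial hi.2
    have h' : ((n.choose i : ℚ)) * (Nat.factorial i) * (Nat.factorial (n - i))
        = Nat.factorial n := by exact_mod_cast congrArg (Nat.cast : ℕ → ℚ) h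
    have hi1 : (0 : ℚ) < Nat.factorial i := by exact_mod_cast Nat.factorial_pos i
    have hi2 : (0 : ℚ) < Nat.factorial (n - i) := by exact_mod_cast Nat.factorial_pos (n - i)
    field_simp
    linarith [h']
  rw [Finset.sum_congr rfl key, ← Finset.sum_div]
  congr 1
  have hins : Finset.range (n + 1) = insert 0 (Finset.Icc 1 n) := by
    ext x; simp [Finset.mem_Icc]; omega
  have h0 : (0 : ℕ) ∉ Finset.Icc 1 n := by simp
  have := Nat.sum_range_choose n
  have hcast : ∑ i ∈ Finset.range (n + 1), (n.choose i : ℚ) = 2 ^ n := by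
    exact_mod_cast congrArg (Nat.cast : ℕ → ℚ) this
  rw [hins, Finset.sum_insert h0] at hcast
  simp at hcast
  linarith [hcast]

theorem gamma_le (d : ℕ) (hd : 1 ≤ d) : gamma d ≤ 1 / (Nat.factorial (d - 1)) := by
  induction d using Nat.strong_induction_on with
  | _ d ih =>
    match d, hd with
    | 1, _ => simp [gamma]
    | 2, _ => norm_num [gamma]
    | 3, _ => norm_num [gamma, Nat.factorial]
    | (d + 4), _ =>
      rw [gamma, Finset.sum_attach _ (fun i => gamma (d + 4 - i) / (Nat.factorial i))]
      have hsum : ∑ i ∈ Finset.Icc 1 (d + 3), gamma (d + 4 - i) / (Nat.factorial i)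
          ≤ ∑ i ∈ Finset.Icc 1 (d + 3),
              (1 : ℚ) / (Nat.factorial (d + 3 - i)) / (Nat.factorial i) := by
        apply Finset.sum_le_sum
        intro i hi
        simp only [Finset.mem_Icc] at hi
        have hlt : d + 4 - i < d + 4 := by omega
        have h1 : 1 ≤ d + 4 - i := by omega
        have := ih (d + 4 - i) hlt h1
        have heq : d + 4 - i - 1 = d + 3 - i := by omega
        rw [heq] at this
        have hi1 : (0 : ℚ) < Nat.factorial i := by exact_mod_cast Nat.factorial_pos i
        exact div_le_div_of_nonneg_right this hi1.le
      rw [sum_inv_fact (d + 3)] at hsum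
      have h2 : (1 : ℚ) < 2 ^ (d + 3) := by
        have : (2 : ℚ) ^ 1 ≤ 2 ^ (d + 3) := by
          apply pow_le_pow_right₀ (by norm_num); omega
        linarith
      have hc : (0 : ℚ) < 2 ^ (d + 3) - 1 := by linarith
      have : (1 / (2 ^ (d + 3) - 1) : ℚ) *
          (∑ i ∈ Finset.Icc 1 (d + 3), gamma (d + 4 - i) / (Nat.factorial i))
          ≤ (1 / (2 ^ (d + 3) - 1) : ℚ) * ((2 ^ (d + 3) - 1) / Nat.factorial (d + 3)) := by
        apply mul_le_mul_of_nonneg_left hsum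
        positivity
      calc (1 / (2 ^ (d + 3) - 1) : ℚ) *
          (∑ i ∈ Finset.Icc 1 (d + 3), gamma (d + 4 - i) / (Nat.factorial i))
          ≤ (1 / (2 ^ (d + 3) - 1) : ℚ) * ((2 ^ (d + 3) - 1) / Nat.factorial (d + 3)) := this
        _ = 1 / Nat.factorial (d + 4 - 1) := by
            have hf : (0 : ℚ) < Nat.factorial (d + 3) := by
              exact_mod_cast Nat.factorial_pos (d + 3)
            have hne : (2 ^ (d + 3) - 1 : ℚ) ≠ 0 := ne_of_gt hc
            have : d + 4 - 1 = d + 3 := by omega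
            rw [this]; field_simp
end

section
/- Define \(\gamma_1 = \gamma_2 = 1\), \(\gamma_3 = 1/3\), and for \(d \ge 4\), \(\gamma_d = \frac{1}{2^{d-1}-1} \sum_{i=1}^{d-1} \frac{\gamma_{d-i}}{i!}\). Then for all \(d \ge 3\), \(\gamma_d < \frac{0.86}{(d-1)!}\). -/
lemma gamma_rec (d : ℕ) : gamma (d+4) = (1 / (2 ^ (d + 3) - 1)) *
    ∑ i ∈ Finset.Icc 1 (d + 3), gamma (d + 4 - i) / (Nat.factorial i) := by
  rw [gamma]
  congr 1
  exact Finset.sum_attach (Finset.Icc 1 (d+3)) (fun i => gamma (d+4-i) / (Nat.factorial i))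

lemma sum_id (m : ℕ) :
    ∑ i ∈ Finset.Icc 1 m, (1:ℚ)/(Nat.factorial i * Nat.factorial (m-i))
      = (2^m - 1)/Nat.factorial m := by
  have h1 : ∀ i ∈ Finset.Icc 1 m, (1:ℚ)/(Nat.factorial i * Nat.factorial (m-i))
      = (m.choose i) / Nat.factorial m := by
    intro i hi
    simp only [Finset.mem_Icc] at hi
    have := Nat.choose_mul_factorial_mul_factorial hi.2
    have h2 : ((m.choose i : ℚ)) * (Nat.factorial i) * (Nat.factorial (m-i)) = Nat.factorial m := by
      exact_mod_cast congrArg (Nat.cast : ℕ → ℚ) this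
    have hf1 : (0:ℚ) < Nat.factorial i := by exact_mod_cast i.factorial_pos
    have hf2 : (0:ℚ) < Nat.factorial (m-i) := by exact_mod_cast (m-i).factorial_pos
    have hf3 : (0:ℚ) < Nat.factorial m := by exact_mod_cast m.factorial_pos
    field_simp
    linarith [h2]
  rw [Finset.sum_congr rfl h1]
  rw [← Finset.sum_div]
  congr 1
  have hins : Finset.range (m+1) = insert 0 (Finset.Icc 1 m) := by
    ext x
    simp only [Finset.mem_range, Finset.mem_insert, Finset.mem_Icc]
    omega
  have := Nat.sum_range_choose m
  have hq : ∑ i ∈ Finset.range (m+1), (m.choose i : ℚ) = 2^m := by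
    exact_mod_cast congrArg (Nat.cast : ℕ → ℚ) this
  rw [hins, Finset.sum_insert (by simp)] at hq
  simp only [Nat.choose_zero_right, Nat.cast_one] at hq
  linarith

theorem gamma_lt (d : ℕ) (hd : 3 ≤ d) : gamma d < (86 / 100) / (Nat.factorial (d - 1)) := by
  induction d using Nat.strong_induction_on with
  | _ d ih =>
    match d, hd, ih with
    | 3, _, _ => norm_num [gamma, Nat.factorial]
    | (n+4), _, ih =>
      have hd1 : n + 4 - 1 = n + 3 := rfl
      rw [gamma_rec, hd1]
      have hfac : ∀ k : ℕ, (0:ℚ) < Nat.factorial k := fun k => by exact_mod_cast k.factorial_pos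
      have hpow : (8:ℚ) ≤ 2 ^ (n+3) := by
        calc (8:ℚ) = 2^3 := by norm_num
        _ ≤ 2^(n+3) := by apply pow_le_pow_right₀ <;> [norm_num; omega]
      have hpos : (0:ℚ) < 2 ^ (n+3) - 1 := by linarith
      have e1 : n+4-(n+1) = 3 := by omega
      have e2 : n+4-(n+2) = 2 := by omega
      have e3 : n+4-(n+3) = 1 := by omega
      have f1 : n+3-(n+1) = 2 := by omega
      have f2 : n+3-(n+2) = 1 := by omega
      have f3 : n+3-(n+3) = 0 := by omega
      have hsplit : ∑ i ∈ Finset.Icc 1 (n+3), gamma (n+4-i)/((Nat.factorial i : ℚ))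
          = (∑ i ∈ Finset.Icc 1 n, gamma (n+4-i)/((Nat.factorial i : ℚ)))
            + gamma 3 / (Nat.factorial (n+1)) + gamma 2 / (Nat.factorial (n+2))
            + gamma 1 / (Nat.factorial (n+3)) := by
        rw [show n+3 = (n+2)+1 from rfl, Finset.sum_Icc_succ_top (by omega),
            show n+2 = (n+1)+1 from rfl, Finset.sum_Icc_succ_top (by omega),
            show n+1 = n+1 from rfl, Finset.sum_Icc_succ_top (by omega), e1, e2, e3]
      have hid := sum_id (n+3)
      have hid_split : (∑ i ∈ Finset.Icc 1 n, (86/100) * ((1:ℚ)/(Nat.factorial i * Nat.factorial (n+3-i))))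
          + (86/100) * (1/((Nat.factorial (n+1) : ℚ) * Nat.factorial 2))
          + (86/100) * (1/((Nat.factorial (n+2) : ℚ) * Nat.factorial 1))
          + (86/100) * (1/((Nat.factorial (n+3) : ℚ) * Nat.factorial 0))
          = (86/100) * ((2^(n+3) - 1)/Nat.factorial (n+3)) := by
        rw [← Finset.mul_sum, ← mul_add, ← mul_add, ← mul_add, ← hid]
        congr 1
        rw [show n+3 = (n+2)+1 from rfl, Finset.sum_Icc_succ_top (by omega),
            show n+2 = (n+1)+1 from rfl, Finset.sum_Icc_succ_top (by omega),
            Finset.sum_Icc_succ_top (by omega), f1, f2, f3]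
      have hbound : (∑ i ∈ Finset.Icc 1 n, gamma (n+4-i)/((Nat.factorial i : ℚ)))
          ≤ ∑ i ∈ Finset.Icc 1 n, (86/100) * ((1:ℚ)/(Nat.factorial i * Nat.factorial (n+3-i))) := by
        apply Finset.sum_le_sum
        intro i hi
        simp only [Finset.mem_Icc] at hi
        have hlt : n+4-i < n+4 := by omega
        have h3 : 3 ≤ n+4-i := by omega
        have hih := ih (n+4-i) hlt h3
        have e : n+4-i-1 = n+3-i := by omega
        rw [e] at hih
        rw [show (86/100:ℚ) * (1/((Nat.factorial i : ℚ) * Nat.factorial (n+3-i)))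
            = ((86/100)/(Nat.factorial (n+3-i)))/(Nat.factorial i) by
          rw [div_div, mul_comm]; ring]
        gcongr
      -- numeric tail inequality
      have hA : (0:ℚ) < Nat.factorial (n+1) := hfac _
      have hB : (0:ℚ) < Nat.factorial (n+2) := hfac _
      have hC : (0:ℚ) < Nat.factorial (n+3) := hfac _
      have hBA : ((Nat.factorial (n+2) : ℚ)) = (n+2) * Nat.factorial (n+1) := by
        rw [show n+2 = (n+1)+1 from rfl, Nat.factorial_succ]; push_cast; ring
      have hCB : ((Nat.factorial (n+3) : ℚ)) = (n+3) * Nat.factorial (n+2) := by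
        rw [show n+3 = (n+2)+1 from rfl, Nat.factorial_succ]; push_cast; ring
      have hnum : gamma 3 / ((Nat.factorial (n+1):ℚ)) + gamma 2 / ((Nat.factorial (n+2):ℚ))
          + gamma 1 / ((Nat.factorial (n+3):ℚ))
          < (86/100) * (1/((Nat.factorial (n+1) : ℚ) * Nat.factorial 2))
          + (86/100) * (1/((Nat.factorial (n+2) : ℚ) * Nat.factorial 1))
          + (86/100) * (1/((Nat.factorial (n+3) : ℚ) * Nat.factorial 0)) := by
        have g3 : gamma 3 = 1/3 := by simp [gamma]
        have g2 : gamma 2 = 1 := by simp [gamma]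
        have g1 : gamma 1 = 1 := by simp [gamma]
        rw [g1, g2, g3]
        have hn : (0:ℚ) ≤ n := Nat.cast_nonneg n
        rw [show (Nat.factorial 2 : ℚ) = 2 by norm_num [Nat.factorial],
            show (Nat.factorial 1 : ℚ) = 1 by norm_num [Nat.factorial],
            show (Nat.factorial 0 : ℚ) = 1 by norm_num [Nat.factorial]]
        have hB2 : 2 * ((Nat.factorial (n+1):ℚ)) ≤ ((Nat.factorial (n+2):ℚ)) := by
          rw [hBA]; nlinarith
        have hC6 : 6 * ((Nat.factorial (n+1):ℚ)) ≤ ((Nat.factorial (n+3):ℚ)) := by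
          rw [hCB, hBA]; nlinarith
        have ibB : (1:ℚ)/((Nat.factorial (n+2):ℚ)) ≤ 1/(2*((Nat.factorial (n+1):ℚ))) :=
          one_div_le_one_div_of_le (by positivity) hB2
        have ibC : (1:ℚ)/((Nat.factorial (n+3):ℚ)) ≤ 1/(6*((Nat.factorial (n+1):ℚ))) :=
          one_div_le_one_div_of_le (by positivity) hC6
        have hA0 : ((Nat.factorial (n+1):ℚ)) ≠ 0 := ne_of_gt hA
        have e1 : (1:ℚ)/3/((Nat.factorial (n+1):ℚ)) = (1/3)*(1/((Nat.factorial (n+1):ℚ))) := by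
          ring
        have e2 : (86:ℚ)/100*(1/(((Nat.factorial (n+1):ℚ))*2)) = (43/100)*(1/((Nat.factorial (n+1):ℚ))) := by
          field_simp; ring
        have e3 : (1:ℚ)/(2*((Nat.factorial (n+1):ℚ))) = (1/2)*(1/((Nat.factorial (n+1):ℚ))) := by
          field_simp
        have e4 : (1:ℚ)/(6*((Nat.factorial (n+1):ℚ))) = (1/6)*(1/((Nat.factorial (n+1):ℚ))) := by
          field_simp
        have hiA : (0:ℚ) < 1/((Nat.factorial (n+1):ℚ)) := by positivity
        have hiB : (0:ℚ) < 1/((Nat.factorial (n+2):ℚ)) := by positivity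
        have hiC : (0:ℚ) < 1/((Nat.factorial (n+3):ℚ)) := by positivity
        have r2 : (86:ℚ)/100*(1/(((Nat.factorial (n+2):ℚ))*1)) = (86/100)*(1/((Nat.factorial (n+2):ℚ))) := by
          rw [mul_one]
        have r3 : (86:ℚ)/100*(1/(((Nat.factorial (n+3):ℚ))*1)) = (86/100)*(1/((Nat.factorial (n+3):ℚ))) := by
          rw [mul_one]
        rw [e1, e2, r2, r3]
        rw [e3] at ibB
        rw [e4] at ibC
        have lhsB : (1:ℚ)/((Nat.factorial (n+2):ℚ)) = 1 * (1/((Nat.factorial (n+2):ℚ))) := by ring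
        linarith
      have key : ∑ i ∈ Finset.Icc 1 (n+3), gamma (n+4-i)/((Nat.factorial i : ℚ))
          < (86/100) * ((2^(n+3) - 1)/Nat.factorial (n+3)) := by
        rw [hsplit, ← hid_split]
        have := add_lt_add_of_le_of_lt hbound (by
          have := hnum; linarith : gamma 3 / ((Nat.factorial (n+1):ℚ)) + gamma 2 / ((Nat.factorial (n+2):ℚ))
          + gamma 1 / ((Nat.factorial (n+3):ℚ))
          < (86/100) * (1/((Nat.factorial (n+1) : ℚ) * Nat.factorial 2))
          + (86/100) * (1/((Nat.factorial (n+2) : ℚ) * Nat.factorial 1))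
          + (86/100) * (1/((Nat.factorial (n+3) : ℚ) * Nat.factorial 0)))
        linarith
      calc (1 / (2 ^ (n+3) - 1)) * ∑ i ∈ Finset.Icc 1 (n+3), gamma (n+4-i)/((Nat.factorial i : ℚ))
          < (1 / (2 ^ (n+3) - 1)) * ((86/100) * ((2^(n+3) - 1)/Nat.factorial (n+3))) := by
            apply mul_lt_mul_of_pos_left key (by positivity)
        _ = (86/100) / (Nat.factorial (n+3)) := by
            field_simp
end

section
/- Let \(A = \{a_0, \dots, a_{k-1}\}\) and \(B = \{b_0, \dots, b_{k-1}\}\) be disjoint \(k\)-element sets and let \(\mathcal{H}(A,B)\) consist of all triples \(\{a_i, a_j, b_{i+j}\}\) and \(\{a_i, a_j, b_{i+j+1}\}\) (indices mod \(k\), with \(i \ne j\)). Let \(X \subseteq A \cup B\) with \(B \cap X \ne \emptyset\). If \(A \cap X = \emptyset\), then the subgraph of \(G_{\mathcal{H}(A,B)}(X)\) induced by \(A\) is connected, and there are no edges of \(G_{\mathcal{H}(A,B)}(X)\) between \(A\) and \(B \setminus X\). -/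
/-- The graph `G_E(X)`: edges are pairs `{y, z}` such that `{x, y, z} ∈ E` for some `x ∈ X`. -/
def blockGraphS {α : Type*} [DecidableEq α] (E : Set (Finset α)) (X : Set α) :
    SimpleGraph α where
  Adj y z := y ≠ z ∧ ∃ x ∈ X, ({x, y, z} : Finset α) ∈ E
  symm := ⟨by
    rintro y z ⟨hyz, x, hx, he⟩
    refine ⟨hyz.symm, x, hx, ?_⟩
    have : ({x, z, y} : Finset α) = {x, y, z} := by ext t; simp; tauto
    rwa [this]⟩
  loopless := ⟨fun y h => h.1 rfl⟩

/-- The hypergraph `H(A,B)`: all triples `{a_i, a_j, b_{i+j}}` and `{a_i, a_j, b_{i+j+1}}`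
with indices taken modulo `k` and `i ≠ j`. -/
def HAB {α : Type*} [DecidableEq α] (k : ℕ) (a b : ZMod k → α) : Set (Finset α) :=
  { e | ∃ i j : ZMod k, i ≠ j ∧
      (e = ({a i, a j, b (i + j)} : Finset α) ∨
       e = ({a i, a j, b (i + j + 1)} : Finset α)) }

theorem hab_A_connected_of_A_disjoint {α : Type*} [DecidableEq α] (k : ℕ) (hk : 2 ≤ k)
    (a b : ZMod k → α) (ha : Function.Injective a) (hb : Function.Injective b)
    (hab : Disjoint (Set.range a) (Set.range b)) (X : Set α)
    (hX : X ⊆ Set.range a ∪ Set.range b)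
    (hBX : (Set.range b ∩ X).Nonempty) (hAX : Set.range a ∩ X = ∅) :
    ((blockGraphS (HAB k a b) X).induce (Set.range a)).Connected ∧
      ∀ y ∈ Set.range a, ∀ z ∈ Set.range b \ X,
        ¬ (blockGraphS (HAB k a b) X).Adj y z := by
  haveI : Fact (1 < k) := ⟨hk⟩
  haveI : NeZero k := ⟨by omega⟩
  obtain ⟨x0, ⟨⟨m, rfl⟩, hmX⟩⟩ := hBX
  set G := blockGraphS (HAB k a b) X with hG
  have hanb : ∀ t u : ZMod k, a t ≠ b u := by
    intro t u h
    exact Set.disjoint_left.mp hab ⟨t, rfl⟩ (h ▸ ⟨u, rfl⟩)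
  -- adjacency lemma
  have adj : ∀ i j : ZMod k, i ≠ j → (i + j = m ∨ i + j = m - 1) →
      G.Adj (a i) (a j) := by
    intro i j hij hsum
    refine ⟨fun h => hij (ha h), b m, hmX, ?_⟩
    rcases hsum with h | h
    · refine ⟨i, j, hij, Or.inl ?_⟩
      rw [h]; ext t; simp; tauto
    · refine ⟨i, j, hij, Or.inr ?_⟩
      have h' : i + j + 1 = m := by rw [h]; ring
      rw [h']; ext t; simp; tauto
  constructor
  · -- connectedness
    set ι : ZMod k → ↥(Set.range a) := fun i => ⟨a i, ⟨i, rfl⟩⟩ with hι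
    have step : ∀ i : ZMod k, (G.induce (Set.range a)).Reachable (ι i) (ι (i - 1)) := by
      intro i
      have h1 : i ≠ i - 1 := by
        intro h
        exact one_ne_zero (sub_eq_self.mp h.symm)
      by_cases hc1 : i + (i - 1) = m - 1
      · exact SimpleGraph.Adj.reachable (adj i (i - 1) h1 (Or.inr hc1))
      by_cases hc2 : i + (i - 1) = m
      · exact SimpleGraph.Adj.reachable (adj i (i - 1) h1 (Or.inl hc2))
      have hne1 : i ≠ m - i := by
        intro h
        apply hc1
        have h2 : i + i = m := eq_sub_iff_add_eq.mp h
        rw [← h2]; ring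
      have hne2 : m - i ≠ i - 1 := by
        intro h
        apply hc2
        have h2 : m = i - 1 + i := sub_eq_iff_eq_add.mp h
        rw [h2]; ring
      have e1 : (G.induce (Set.range a)).Adj (ι i) (ι (m - i)) :=
        adj i (m - i) hne1 (Or.inl (by ring))
      have e2 : (G.induce (Set.range a)).Adj (ι (m - i)) (ι (i - 1)) :=
        adj (m - i) (i - 1) hne2 (Or.inr (by ring))
      exact e1.reachable.trans e2.reachable
    have hall : ∀ n : ℕ, (G.induce (Set.range a)).Reachable (ι 0) (ι (0 - (n : ZMod k))) := by
      intro n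
      induction n with
      | zero => simpa using SimpleGraph.Reachable.refl (ι 0)
      | succ n ih =>
        have : ((0 : ZMod k) - (n : ZMod k)) - 1 = 0 - ((n + 1 : ℕ) : ZMod k) := by
          push_cast; ring
        exact ih.trans (this ▸ step (0 - (n : ZMod k)))
    have hall' : ∀ j : ZMod k, (G.induce (Set.range a)).Reachable (ι 0) (ι j) := by
      intro j
      have : (0 : ZMod k) - (((-j).val : ℕ) : ZMod k) = j := by
        rw [ZMod.natCast_val, ZMod.cast_id]; ring
      exact this ▸ hall ((-j).val)
    haveI : Nonempty ↥(Set.range a) := ⟨⟨a 0, 0, rfl⟩⟩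
    constructor
    rintro ⟨y, i, rfl⟩ ⟨z, j, rfl⟩
    exact (hall' i).symm.trans (hall' j)
  · -- no edges between A and B \ X
    rintro y ⟨i, rfl⟩ z ⟨⟨j, rfl⟩, hzX⟩ ⟨hne, x, hxX, i', j', hij', he⟩
    have hxb : x ∈ Set.range b := by
      rcases hX hxX with h | h
      · exact absurd (Set.mem_inter h hxX) (by rw [hAX]; exact not_false)
      · exact h
    obtain ⟨ux, rfl⟩ := hxb
    obtain ⟨s, hs⟩ : ∃ s, ({b ux, a i, b j} : Finset α) = {a i', a j', b s} := by
      rcases he with h | h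
      · exact ⟨_, h⟩
      · exact ⟨_, h⟩
    have hmem : ∀ u : ZMod k, b u ∈ ({a i', a j', b s} : Finset α) → b u = b s := by
      intro u hu
      simp only [Finset.mem_insert, Finset.mem_singleton] at hu
      rcases hu with h | h | h
      · exact absurd h.symm (hanb i' u)
      · exact absurd h.symm (hanb j' u)
      · exact h
    have hx : b ux = b s := hmem ux (by rw [← hs]; simp)
    have hz : b j = b s := hmem j (by rw [← hs]; simp)
    exact hzX ((hx.trans hz.symm) ▸ hxX)
end

section
/- Let \(A = \{a_0, \dots, a_{k-1}\}\) and \(B = \{b_0, \dots, b_{k-1}\}\) be disjoint \(k\)-element sets and let \(\mathcal{H}(A,B)\) consist of all triples \(\{a_i, a_j, b_{i+j}\}\) and \(\{a_i, a_j, b_{i+j+1}\}\) (indices mod \(k\), \(i \ne j\)). Suppose \(X \subseteq A \cup B\) satisfies \(A \cap X \neq \emptyset\), \(A \setminus X \neq \emptyset\), and \(B \setminus X \neq \emptyset\). Then every vertex of \(B \setminus X\) is adjacent in \(G_{\mathcal{H}(A,B)}(X)\) to some vertex of \(A \setminus X\). -/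
theorem hab_B_attached_to_A {α : Type*} [DecidableEq α] (k : ℕ) (hk : 2 ≤ k)
    (a b : ZMod k → α) (ha : Function.Injective a) (hb : Function.Injective b)
    (hab : Disjoint (Set.range a) (Set.range b)) (X : Set α)
    (hX : X ⊆ Set.range a ∪ Set.range b)
    (hAX : (Set.range a ∩ X).Nonempty) (hA : (Set.range a \ X).Nonempty)
    (hB : (Set.range b \ X).Nonempty) :
    ∀ z ∈ Set.range b \ X, ∃ y ∈ Set.range a \ X,
      (blockGraphS (HAB k a b) X).Adj z y := by
  haveI : NeZero k := ⟨by omega⟩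
  haveI : Fact (1 < k) := ⟨by omega⟩
  rintro z ⟨⟨m, rfl⟩, hzX⟩
  obtain ⟨_, ⟨p, rfl⟩, hpX⟩ := hAX
  obtain ⟨_, ⟨q, rfl⟩, hqX⟩ := hA
  by_cases H : ∃ i, a i ∈ X ∧ ∃ j, j ≠ i ∧ (j = m - i ∨ j = m - i - 1) ∧ a j ∉ X
  · obtain ⟨i, hiS, j, hji, hjm, hjS⟩ := H
    refine ⟨a j, ⟨⟨j, rfl⟩, hjS⟩, ?_, a i, hiS, ?_⟩
    · intro h
      exact Set.disjoint_left.mp hab ⟨j, h.symm⟩ ⟨m, rfl⟩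
    · refine ⟨i, j, fun h => hji h.symm, ?_⟩
      rcases hjm with rfl | rfl
      · left
        have hm : i + (m - i) = m := by ring
        rw [hm]
        ext t; simp; tauto
      · right
        have hm : i + (m - i - 1) + 1 = m := by ring
        rw [hm]
        ext t; simp; tauto
  · exfalso
    push_neg at H
    have hone : (1 : ZMod k) ≠ 0 := one_ne_zero
    have step : ∀ i, a i ∈ X → a (i - 1) ∈ X := by
      intro i hi
      by_cases h2 : m - i = i
      · have : m - i - 1 = i - 1 := by rw [h2]
        have hne : i - 1 ≠ i := by
          intro h; exact hone (by linear_combination h - h + (sub_eq_self.mp h))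
        exact this ▸ H i hi (i - 1) hne (Or.inr this.symm)
      · have hmi : a (m - i) ∈ X := H i hi (m - i) h2 (Or.inl rfl)
        by_cases h3 : i - 1 = m - i
        · exact h3 ▸ hmi
        · have : i - 1 = m - (m - i) - 1 := by ring
          exact H (m - i) hmi (i - 1) h3 (Or.inr this)
    have all : ∀ n : ℕ, a (p - n) ∈ X := by
      intro n
      induction n with
      | zero => simpa using hpX
      | succ n ih =>
        have := step _ ih
        have he : p - (n : ZMod k) - 1 = p - ((n + 1 : ℕ) : ZMod k) := by
          push_cast; ring
        rwa [he] at this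
    have hq : a q ∈ X := by
      have := all (p - q).val
      rwa [ZMod.natCast_val, ZMod.cast_id, sub_sub_cancel] at this
    exact hqX hq
end
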